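/- arXiv:1210.2827 — 7 statements merged into one kernel-verified Lean document; each statement's English description precedes it below -/
import Mathlib

section
/- Let A be a commutative ring written as a filtered colimit A = colim A_i of commutative rings. If B is a finitely presented commutative A-algebra, then there exists an index i and a finitely presented commutative A_i-algebra B_i such that B is isomorphic to B_i ⊗_{A_i} A as A-algebras. -/
/-!
STATEMENT 0: Let A = colim A_i be a filtered colimit of commutative rings.
If B is a finitely presented commutative A-algebra, then there is an index i and
a finitely presented A_i-algebra B_i with B ≅ B_i ⊗_{A_i} A as A-algebras.

The filtered colimit is encoded by a directed preorder `ι`, a compatible system of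
ring homomorphisms, maps `g i : A i →+* R` to the colimit `R`, which are jointly
surjective and satisfy the usual filtered-colimit equalizing property.
-/

open TensorProduct

theorem lift_mvpoly
    {ι : Type u} [Preorder ι] [IsDirected ι (· ≤ ·)] [Nonempty ι]
    {A : ι → Type u} [∀ i, CommRing (A i)]
    (f : ∀ i j, i ≤ j → A i →+* A j)
    {R : Type u} [CommRing R]
    (g : ∀ i, A i →+* R)
    (hg : ∀ i j (hij : i ≤ j), (g j).comp (f i j hij) = g i)
    (hsurj : ∀ x : R, ∃ i y, g i y = x)
    {n : ℕ} (q : MvPolynomial (Fin n) R) :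
    ∃ i q', MvPolynomial.map (g i) q' = q := by
  induction q using MvPolynomial.induction_on with
  | C a =>
      obtain ⟨i, y, hy⟩ := hsurj a
      exact ⟨i, MvPolynomial.C y, by simp [hy]⟩
  | add p q hp hq =>
      obtain ⟨i, p', hp'⟩ := hp
      obtain ⟨j, q', hq'⟩ := hq
      obtain ⟨k, hik, hjk⟩ := directed_of (· ≤ ·) i j
      refine ⟨k, MvPolynomial.map (f i k hik) p' + MvPolynomial.map (f j k hjk) q', ?_⟩
      rw [map_add, MvPolynomial.map_map, MvPolynomial.map_map, hg, hg, hp', hq']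
  | mul_X p s hp =>
      obtain ⟨i, p', hp'⟩ := hp
      exact ⟨i, p' * MvPolynomial.X s, by rw [map_mul, hp', MvPolynomial.map_X]⟩


set_option maxHeartbeats 1000000 in
set_option synthInstance.maxHeartbeats 400000 in
theorem statement0
    {ι : Type u} [Preorder ι] [IsDirected ι (· ≤ ·)] [Nonempty ι]
    (A : ι → Type u) [∀ i, CommRing (A i)]
    (f : ∀ i j, i ≤ j → A i →+* A j)
    (hf_id : ∀ i, f i i le_rfl = RingHom.id (A i))
    (hf_comp : ∀ i j k (hij : i ≤ j) (hjk : j ≤ k),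
      (f j k hjk).comp (f i j hij) = f i k (le_trans hij hjk))
    (R : Type u) [CommRing R]
    (g : ∀ i, A i →+* R)
    (hg : ∀ i j (hij : i ≤ j), (g j).comp (f i j hij) = g i)
    (hsurj : ∀ x : R, ∃ i y, g i y = x)
    (hexact : ∀ i (x y : A i), g i x = g i y →
      ∃ j, ∃ hij : i ≤ j, f i j hij x = f i j hij y)
    (B : Type u) [CommRing B] [Algebra R B]
    (hB : Algebra.FinitePresentation R B) :
    ∃ (i : ι) (Bi : Type u) (_ : CommRing Bi) (_ : Algebra (A i) Bi),
      Algebra.FinitePresentation (A i) Bi ∧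
      (letI : Algebra (A i) R := (g i).toAlgebra
       Nonempty ((R ⊗[A i] Bi) ≃ₐ[R] B)) := by
  classical
  obtain ⟨n, π, hπsurj, hπker⟩ := hB
  obtain ⟨m, p, hp⟩ := Submodule.fg_iff_exists_fin_generating_family.mp hπker
  choose I q₀ hq₀ using fun k : Fin m => lift_mvpoly f g hg hsurj (p k)
  obtain ⟨i, hi⟩ := (Finset.univ.image I).exists_le
  have hIle : ∀ k, I k ≤ i := fun k => hi _ (Finset.mem_image_of_mem _ (Finset.mem_univ k))
  set q : Fin m → MvPolynomial (Fin n) (A i) :=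
    fun k => MvPolynomial.map (f (I k) i (hIle k)) (q₀ k) with hq_def
  have hqp : ∀ k, MvPolynomial.map (g i) (q k) = p k := fun k => by
    rw [hq_def, MvPolynomial.map_map, hg, hq₀]
  set J : Ideal (MvPolynomial (Fin n) (A i)) := Ideal.span (Set.range q) with hJ_def
  refine ⟨i, MvPolynomial (Fin n) (A i) ⧸ J, inferInstance, inferInstance, ?_, ?_⟩
  · exact Algebra.FinitePresentation.quotient (Submodule.fg_span (Set.finite_range q))
  · letI : Algebra (A i) R := (g i).toAlgebra
    letI : Algebra (A i) B := ((algebraMap R B).comp (g i)).toAlgebra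
    haveI : IsScalarTower (A i) R B := IsScalarTower.of_algebraMap_eq' rfl
    set Bi := MvPolynomial (Fin n) (A i) ⧸ J with hBi_def
    -- the map α : MvPolynomial (Fin n) (A i) →ₐ[A i] B
    set α : MvPolynomial (Fin n) (A i) →ₐ[A i] B :=
      MvPolynomial.aeval (fun s => π (MvPolynomial.X s)) with hα_def
    have key : ∀ F, α F = π (MvPolynomial.map (g i) F) := by
      have : (α : MvPolynomial (Fin n) (A i) →+* B)
          = (π : MvPolynomial (Fin n) R →+* B).comp (MvPolynomial.map (g i)) := by
        apply MvPolynomial.ringHom_ext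
        · intro c
          simp only [hα_def, AlgHom.coe_toRingHom, MvPolynomial.aeval_C, RingHom.coe_comp,
            Function.comp_apply, MvPolynomial.map_C]
          rw [← MvPolynomial.algebraMap_eq, AlgHom.commutes]
          rfl
        · intro s
          simp [hα_def]
      intro F
      exact congrArg (fun h => h F) (congrArg DFunLike.coe this)
    have hαJ : ∀ a ∈ J, α a = 0 := by
      intro a ha
      rw [hJ_def] at ha
      refine Submodule.span_induction ?_ ?_ ?_ ?_ ha
      · rintro x ⟨k, rfl⟩
        rw [key, hqp k]
        have hpk : p k ∈ RingHom.ker π.toRingHom := by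
          rw [← hp]; exact Ideal.subset_span ⟨k, rfl⟩
        exact hpk
      · exact map_zero α
      · intro x y _ _ hx hy; rw [map_add, hx, hy, add_zero]
      · intro c x _ hx; rw [smul_eq_mul, map_mul, hx, mul_zero]
    set β : Bi →ₐ[A i] B := Ideal.Quotient.liftₐ J α hαJ with hβ_def
    have hβmk : ∀ F, β (Ideal.Quotient.mk J F) = α F := fun F => rfl
    set ψ : (R ⊗[A i] Bi) →ₐ[R] B :=
      Algebra.TensorProduct.lift (Algebra.ofId R B) β (fun x y => Commute.all _ _) with hψ_def
    have hψtmul : ∀ (x : R) (y : Bi), ψ (x ⊗ₜ y) = algebraMap R B x * β y := by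
      intro x y
      rw [hψ_def, Algebra.TensorProduct.lift_tmul]
      rfl
    set χ' : MvPolynomial (Fin n) R →ₐ[R] (R ⊗[A i] Bi) :=
      MvPolynomial.aeval (fun s =>
        ((1 : R) ⊗ₜ[A i] (Ideal.Quotient.mk J (MvPolynomial.X s)) : R ⊗[A i] Bi))
      with hχ'_def
    have key2 : ∀ F, χ' (MvPolynomial.map (g i) F)
        = (1 : R) ⊗ₜ (Ideal.Quotient.mk J F) := by
      have h2 : χ'.toRingHom.comp (MvPolynomial.map (g i))
          = (Algebra.TensorProduct.includeRight.comp
              (Ideal.Quotient.mkₐ (A i) J)).toRingHom := by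
        apply MvPolynomial.ringHom_ext
        · intro c
          show χ' (MvPolynomial.map (g i) (MvPolynomial.C c))
              = (Algebra.TensorProduct.includeRight.comp
                  (Ideal.Quotient.mkₐ (A i) J)) (MvPolynomial.C c)
          rw [MvPolynomial.map_C, ← MvPolynomial.algebraMap_eq, AlgHom.commutes,
            ← MvPolynomial.algebraMap_eq, AlgHom.commutes,
            IsScalarTower.algebraMap_apply (A i) R (R ⊗[A i] Bi)]
          rfl
        · intro s
          show χ' (MvPolynomial.map (g i) (MvPolynomial.X s))
              = (Algebra.TensorProduct.includeRight.comp
                  (Ideal.Quotient.mkₐ (A i) J)) (MvPolynomial.X s)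
          rw [MvPolynomial.map_X, hχ'_def, MvPolynomial.aeval_X]
          rfl
      intro F
      exact congrArg (fun h => h F) (congrArg DFunLike.coe h2)
    have hχ'ker : ∀ a ∈ RingHom.ker π.toRingHom, χ' a = 0 := by
      intro a ha
      rw [← hp] at ha
      refine Submodule.span_induction ?_ ?_ ?_ ?_ ha
      · rintro x ⟨k, rfl⟩
        rw [← hqp k, key2]
        have : Ideal.Quotient.mk J (q k) = 0 :=
          Ideal.Quotient.eq_zero_iff_mem.mpr (Ideal.subset_span ⟨k, rfl⟩)
        rw [this]
        exact TensorProduct.tmul_zero Bi (1 : R)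
      · exact map_zero χ'
      · intro x y _ _ hx hy; rw [map_add, hx, hy, add_zero]
      · intro c x _ hx; rw [smul_eq_mul, map_mul, hx]; exact mul_zero (χ' c)
    set e : (MvPolynomial (Fin n) R ⧸ RingHom.ker π.toRingHom) ≃ₐ[R] B :=
      Ideal.quotientKerAlgEquivOfSurjective hπsurj with he_def
    set χ : B →ₐ[R] (R ⊗[A i] Bi) :=
      (Ideal.Quotient.liftₐ (RingHom.ker π.toRingHom) χ' hχ'ker).comp (e.symm : B →ₐ[R] _)
      with hχ_def
    have hemk : ∀ F, e (Ideal.Quotient.mk _ F) = π F := fun F => rfl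
    have hχπ : ∀ F, χ (π F) = χ' F := by
      intro F
      rw [hχ_def, AlgHom.comp_apply]
      have : e.symm (π F) = Ideal.Quotient.mk _ F := by
        rw [← hemk F, AlgEquiv.symm_apply_apply]
      show (Ideal.Quotient.liftₐ (RingHom.ker π.toRingHom) χ' hχ'ker) (e.symm (π F)) = χ' F
      rw [this]
      rfl
    have hψχ' : ∀ F, ψ (χ' F) = π F := by
      have h3 : ψ.comp χ' = π := by
        apply MvPolynomial.algHom_ext
        intro s
        rw [AlgHom.comp_apply, hχ'_def, MvPolynomial.aeval_X, hψtmul, map_one, one_mul,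
          hβmk, key]
        simp
      exact fun F => congrArg (fun h => h F) h3
    refine ⟨AlgEquiv.ofAlgHom ψ χ ?_ ?_⟩
    · apply AlgHom.ext
      intro b
      obtain ⟨F, rfl⟩ := hπsurj b
      rw [AlgHom.comp_apply, hχπ, hψχ']
      rfl
    · apply AlgHom.ext
      intro z
      rw [AlgHom.comp_apply, AlgHom.id_apply]
      induction z using TensorProduct.induction_on with
      | zero => rw [map_zero, map_zero]
      | add x y hx hy => rw [map_add, map_add, hx, hy]
      | tmul x y =>
          obtain ⟨F, rfl⟩ := Ideal.Quotient.mk_surjective (I := J) y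
          rw [hψtmul, hβmk, key, map_mul, hχπ, key2, AlgHom.commutes,
            Algebra.TensorProduct.algebraMap_apply, Algebra.TensorProduct.tmul_mul_tmul,
            one_mul, mul_one, Algebra.algebraMap_self_apply]
end

section
/- Let A = colim A_i be a filtered colimit of commutative rings, let B be a finitely presented commutative A_i-algebra for some index i, and let C be any commutative A_i-algebra. Then the natural map colim_{j ≥ i} Hom_{A_j-alg}(B ⊗_{A_i} A_j, C ⊗_{A_i} A_j) → Hom_{A-alg}(B ⊗_{A_i} A, C ⊗_{A_i} A) is a bijection. -/
/-!
STATEMENT 1: Let A = colim A_j be a filtered colimit of commutative rings, B a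
finitely presented A_i-algebra for some index i and C any A_i-algebra.  Then
  colim_{j ≥ i} Hom_{A_j-alg}(B ⊗_{A_i} A_j, C ⊗_{A_i} A_j)
    → Hom_{A-alg}(B ⊗_{A_i} A, C ⊗_{A_i} A)
is a bijection.

We encode the situation relative to the fixed index i: the base ring R0 plays the
role of A_i, (A j) is the filtered system of R0-algebras indexed by {j ≥ i} with
colimit R = A, and B, C are R0-algebras, B finitely presented.  Bijectivity of the
map from the colimit of hom-sets is expressed as (1) every A-algebra map over the
colimit is, via the canonical comparison maps `Algebra.TensorProduct.map`,
induced by a map at some finite level, and (2) two maps at a finite level with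
equal images at the colimit level become equal at some later level.
-/

open TensorProduct

set_option synthInstance.maxHeartbeats 1000000
set_option maxHeartbeats 2000000

universe u


theorem aux_exact
    {ι : Type u} [Preorder ι] [IsDirected ι (· ≤ ·)] [Nonempty ι]
    (R0 : Type u) [CommRing R0]
    (A : ι → Type u) [∀ i, CommRing (A i)] [∀ i, Algebra R0 (A i)]
    (f : ∀ i j, i ≤ j → A i →ₐ[R0] A j)
    (hf_id : ∀ i, f i i le_rfl = AlgHom.id R0 (A i))
    (hf_comp : ∀ i j k (hij : i ≤ j) (hjk : j ≤ k),
      (f j k hjk).comp (f i j hij) = f i k (le_trans hij hjk))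
    (R : Type u) [CommRing R] [Algebra R0 R]
    (g : ∀ i, A i →ₐ[R0] R)
    (hg : ∀ i j (hij : i ≤ j), (g j).comp (f i j hij) = g i)
    (hsurj : ∀ x : R, ∃ i y, g i y = x)
    (hexact : ∀ i (x y : A i), g i x = g i y →
      ∃ j, ∃ hij : i ≤ j, f i j hij x = f i j hij y)
    (C : Type u) [CommRing C] [Algebra R0 C]
    (j : ι) (x y : (A j) ⊗[R0] C)
    (h : Algebra.TensorProduct.map (g j) (AlgHom.id R0 C) x =
         Algebra.TensorProduct.map (g j) (AlgHom.id R0 C) y) :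
    ∃ k, ∃ hjk : j ≤ k, Algebra.TensorProduct.map (f j k hjk) (AlgHom.id R0 C) x =
      Algebra.TensorProduct.map (f j k hjk) (AlgHom.id R0 C) y := by
  classical
  set fm : ∀ i j : ι, i ≤ j → A i →ₗ[R0] A j := fun i j h => (f i j h).toLinearMap with hfm
  have Hg : ∀ (i j : ι) (hij : i ≤ j) (x : A i),
      (g j).toLinearMap (fm i j hij x) = (g i).toLinearMap x := fun i j hij x =>
    AlgHom.congr_fun (hg i j hij) x
  set π : Module.DirectLimit A fm →ₗ[R0] R :=
    Module.DirectLimit.lift R0 ι A fm (fun i => (g i).toLinearMap) Hg with hπ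
  have hπ_inj : Function.Injective π := by
    rw [injective_iff_map_eq_zero]
    intro z hz
    induction z using Module.DirectLimit.induction_on with
    | ih i a =>
      rw [Module.DirectLimit.lift_of] at hz
      obtain ⟨k, hik, hk⟩ := hexact i a 0 (by simpa using hz)
      rw [map_zero] at hk
      rw [← Module.DirectLimit.of_f (i := i) (j := k) (hij := hik)]
      show Module.DirectLimit.of R0 ι A fm k (f i k hik a) = 0
      rw [hk, map_zero]
  have hπ_surj : Function.Surjective π := by
    intro r
    obtain ⟨i, a, ha⟩ := hsurj r
    exact ⟨Module.DirectLimit.of R0 ι A fm i a, by rw [hπ, Module.DirectLimit.lift_of]; exact ha⟩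
  set e : Module.DirectLimit A fm ≃ₗ[R0] R := LinearEquiv.ofBijective π ⟨hπ_inj, hπ_surj⟩ with he
  set D := TensorProduct.directLimitLeft fm C with hD
  set E : Module.DirectLimit A fm ⊗[R0] C ≃ₗ[R0] R ⊗[R0] C :=
    TensorProduct.congr e (LinearEquiv.refl R0 C) with hE
  -- bridge
  have bridge : ∀ (i : ι) (z : (A i) ⊗[R0] C),
      Algebra.TensorProduct.map (g i) (AlgHom.id R0 C) z =
        E (D.symm (Module.DirectLimit.of R0 ι (fun i => (A i) ⊗[R0] C)
          (fun i j h => LinearMap.rTensor C (fm i j h)) i z)) := by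
    intro i z
    induction z using TensorProduct.induction_on with
    | zero => simp
    | tmul a c =>
      rw [TensorProduct.directLimitLeft_symm_of_tmul]
      simp only [hE, TensorProduct.congr_tmul, LinearEquiv.refl_apply]
      have : e (Module.DirectLimit.of R0 ι A fm i a) = g i a := by
        show π (Module.DirectLimit.of R0 ι A fm i a) = g i a
        rw [hπ, Module.DirectLimit.lift_of]; rfl
      rw [this, Algebra.TensorProduct.map_tmul]
      rfl
    | add z w hz hw =>
      rw [map_add, map_add, map_add, map_add, hz, hw]
  haveI : DirectedSystem (fun i => (A i) ⊗[R0] C)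
      (fun i j h => LinearMap.rTensor C (fm i j h)) := by
    constructor
    · intro i z
      have h1 : fm i i le_rfl = LinearMap.id := by
        ext a; exact AlgHom.congr_fun (hf_id i) a
      rw [h1, LinearMap.rTensor_id, LinearMap.id_apply]
    · intro k j' i hij hjk z
      have h1 : fm j' k hjk ∘ₗ fm i j' hij = fm i k (hij.trans hjk) := by
        ext a; exact AlgHom.congr_fun (hf_comp i j' k hij hjk) a
      rw [← LinearMap.comp_apply, ← LinearMap.rTensor_comp, h1]
  -- conclude
  have hof : Module.DirectLimit.of R0 ι (fun i => (A i) ⊗[R0] C)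
      (fun i j h => LinearMap.rTensor C (fm i j h)) j x =
    Module.DirectLimit.of R0 ι (fun i => (A i) ⊗[R0] C)
      (fun i j h => LinearMap.rTensor C (fm i j h)) j y := by
    have h' : E (D.symm (Module.DirectLimit.of R0 ι (fun i => (A i) ⊗[R0] C)
        (fun i j h => LinearMap.rTensor C (fm i j h)) j x)) =
      E (D.symm (Module.DirectLimit.of R0 ι (fun i => (A i) ⊗[R0] C)
        (fun i j h => LinearMap.rTensor C (fm i j h)) j y)) := by
      rw [← bridge, ← bridge]; exact h
    exact D.symm.injective (E.injective h')
  have hzero : Module.DirectLimit.of R0 ι (fun i => (A i) ⊗[R0] C)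
      (fun i j h => LinearMap.rTensor C (fm i j h)) j (x - y) = 0 := by
    rw [map_sub, hof, sub_self]
  obtain ⟨k, hjk, hk⟩ := Module.DirectLimit.of.zero_exact hzero
  refine ⟨k, hjk, ?_⟩
  have hmap : ∀ z : (A j) ⊗[R0] C,
      Algebra.TensorProduct.map (f j k hjk) (AlgHom.id R0 C) z
        = LinearMap.rTensor C (fm j k hjk) z := by
    intro z
    induction z using TensorProduct.induction_on with
    | zero => simp
    | tmul a c => simp [Algebra.TensorProduct.map_tmul, LinearMap.rTensor_tmul, hfm]
    | add z w hz hw => rw [map_add, map_add, hz, hw]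
  rw [hmap, hmap, ← sub_eq_zero, ← map_sub]
  exact hk

theorem aux_surj
    {ι : Type u} [Preorder ι] [IsDirected ι (· ≤ ·)] [Nonempty ι]
    (R0 : Type u) [CommRing R0]
    (A : ι → Type u) [∀ i, CommRing (A i)] [∀ i, Algebra R0 (A i)]
    (f : ∀ i j, i ≤ j → A i →ₐ[R0] A j)
    (R : Type u) [CommRing R] [Algebra R0 R]
    (g : ∀ i, A i →ₐ[R0] R)
    (hg : ∀ i j (hij : i ≤ j), (g j).comp (f i j hij) = g i)
    (hsurj : ∀ x : R, ∃ i y, g i y = x)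
    (C : Type u) [CommRing C] [Algebra R0 C]
    (x : R ⊗[R0] C) :
    ∃ j y, Algebra.TensorProduct.map (g j) (AlgHom.id R0 C) y = x := by
  have hcomp : ∀ (j k : ι) (hjk : j ≤ k) (z : (A j) ⊗[R0] C),
      Algebra.TensorProduct.map (g k) (AlgHom.id R0 C)
        (Algebra.TensorProduct.map (f j k hjk) (AlgHom.id R0 C) z) =
      Algebra.TensorProduct.map (g j) (AlgHom.id R0 C) z := by
    intro j k hjk z
    induction z using TensorProduct.induction_on with
    | zero => simp
    | tmul a c =>
      simp only [Algebra.TensorProduct.map_tmul, AlgHom.coe_id, id_eq]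
      rw [← AlgHom.comp_apply, hg j k hjk]
    | add z w hz hw => rw [map_add, map_add, map_add, hz, hw]
  induction x using TensorProduct.induction_on with
  | zero => exact ⟨Classical.arbitrary ι, 0, map_zero _⟩
  | tmul r c =>
    obtain ⟨i, a, rfl⟩ := hsurj r
    exact ⟨i, a ⊗ₜ c, by simp [Algebra.TensorProduct.map_tmul]⟩
  | add x y hx hy =>
    obtain ⟨j1, y1, rfl⟩ := hx
    obtain ⟨j2, y2, rfl⟩ := hy
    obtain ⟨k, h1, h2⟩ := exists_ge_ge j1 j2
    refine ⟨k, Algebra.TensorProduct.map (f j1 k h1) (AlgHom.id R0 C) y1 +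
      Algebra.TensorProduct.map (f j2 k h2) (AlgHom.id R0 C) y2, ?_⟩
    rw [map_add, hcomp, hcomp]

theorem map_map_aux {R0 A1 A2 A3 D : Type u} [CommRing R0] [CommRing A1] [CommRing A2]
    [CommRing A3] [CommRing D] [Algebra R0 A1] [Algebra R0 A2] [Algebra R0 A3] [Algebra R0 D]
    (φ1 : A1 →ₐ[R0] A2) (φ2 : A2 →ₐ[R0] A3) (z : A1 ⊗[R0] D) :
    Algebra.TensorProduct.map (φ2.comp φ1) (AlgHom.id R0 D) z =
      Algebra.TensorProduct.map φ2 (AlgHom.id R0 D)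
        (Algebra.TensorProduct.map φ1 (AlgHom.id R0 D) z) := by
  have h := Algebra.TensorProduct.map_comp φ2 φ1 (AlgHom.id R0 D) (AlgHom.id R0 D)
  rw [AlgHom.id_comp] at h
  rw [h]
  rfl



theorem statement1
    {ι : Type u} [Preorder ι] [IsDirected ι (· ≤ ·)] [Nonempty ι]
    (R0 : Type u) [CommRing R0]
    (A : ι → Type u) [∀ i, CommRing (A i)] [∀ i, Algebra R0 (A i)]
    (f : ∀ i j, i ≤ j → A i →ₐ[R0] A j)
    (hf_id : ∀ i, f i i le_rfl = AlgHom.id R0 (A i))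
    (hf_comp : ∀ i j k (hij : i ≤ j) (hjk : j ≤ k),
      (f j k hjk).comp (f i j hij) = f i k (le_trans hij hjk))
    (R : Type u) [CommRing R] [Algebra R0 R]
    (g : ∀ i, A i →ₐ[R0] R)
    (hg : ∀ i j (hij : i ≤ j), (g j).comp (f i j hij) = g i)
    (hsurj : ∀ x : R, ∃ i y, g i y = x)
    (hexact : ∀ i (x y : A i), g i x = g i y →
      ∃ j, ∃ hij : i ≤ j, f i j hij x = f i j hij y)
    (B : Type u) [CommRing B] [Algebra R0 B]
    (C : Type u) [CommRing C] [Algebra R0 C]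
    (hB : Algebra.FinitePresentation R0 B) :
    -- surjectivity of the natural map from the colimit of hom-sets
    ((∀ χ : (R ⊗[R0] B) →ₐ[R] (R ⊗[R0] C),
      ∃ (j : ι) (φ : ((A j) ⊗[R0] B) →ₐ[A j] ((A j) ⊗[R0] C)),
        ∀ x, χ (Algebra.TensorProduct.map (g j) (AlgHom.id R0 B) x) =
          Algebra.TensorProduct.map (g j) (AlgHom.id R0 C) (φ x))
    -- injectivity of the natural map from the colimit of hom-sets
    ∧ (∀ (j : ι) (φ ψ : ((A j) ⊗[R0] B) →ₐ[A j] ((A j) ⊗[R0] C)),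
        (∀ x, Algebra.TensorProduct.map (g j) (AlgHom.id R0 C) (φ x) =
          Algebra.TensorProduct.map (g j) (AlgHom.id R0 C) (ψ x)) →
        ∃ (k : ι) (hjk : j ≤ k),
          ∀ x, Algebra.TensorProduct.map (f j k hjk) (AlgHom.id R0 C) (φ x) =
            Algebra.TensorProduct.map (f j k hjk) (AlgHom.id R0 C) (ψ x))) := by
  classical
  constructor
  · -- surjectivity
    intro χ
    obtain ⟨n, p, hp, hker⟩ := hB.out
    obtain ⟨t, ht⟩ := hker
    set u : B →ₐ[R0] R ⊗[R0] C :=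
      (χ.restrictScalars R0).comp Algebra.TensorProduct.includeRight with hu
    choose jr dr hdr using fun r : Fin n =>
      aux_surj R0 A f R g hg hsurj C (u (p (MvPolynomial.X r)))
    obtain ⟨j₀, hj₀⟩ := (Finset.univ.image jr).exists_le
    have hjr : ∀ r, jr r ≤ j₀ := fun r => hj₀ _ (Finset.mem_image_of_mem jr (Finset.mem_univ r))
    set d : Fin n → (A j₀) ⊗[R0] C := fun r =>
      Algebra.TensorProduct.map (f (jr r) j₀ (hjr r)) (AlgHom.id R0 C) (dr r) with hd
    have hgd : ∀ r, Algebra.TensorProduct.map (g j₀) (AlgHom.id R0 C) (d r)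
        = u (p (MvPolynomial.X r)) := by
      intro r
      rw [hd]
      dsimp only
      rw [← map_map_aux (f (jr r) j₀ (hjr r)) (g j₀) (dr r), hg (jr r) j₀ (hjr r)]
      exact hdr r
    have hw : ∀ q, Algebra.TensorProduct.map (g j₀) (AlgHom.id R0 C)
        (MvPolynomial.aeval d q) = u (p q) := by
      have h1 : ((Algebra.TensorProduct.map (g j₀) (AlgHom.id R0 C)).comp
          (MvPolynomial.aeval d) : MvPolynomial (Fin n) R0 →ₐ[R0] R ⊗[R0] C) = u.comp p := by
        apply MvPolynomial.algHom_ext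
        intro r
        simp only [AlgHom.comp_apply, MvPolynomial.aeval_X]
        exact hgd r
      exact fun q => AlgHom.congr_fun h1 q
    have hker' : ∀ q ∈ t, (p q : B) = 0 := by
      intro q hq
      have h2 : q ∈ RingHom.ker p.toRingHom := ht ▸ Ideal.subset_span hq
      exact h2
    have key : ∀ s : Finset (MvPolynomial (Fin n) R0), (∀ q ∈ s, (p q : B) = 0) →
        ∃ k, ∃ hk : j₀ ≤ k, ∀ q ∈ s,
          Algebra.TensorProduct.map (f j₀ k hk) (AlgHom.id R0 C) (MvPolynomial.aeval d q) = 0 := by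
      intro s
      induction s using Finset.induction_on with
      | empty => exact fun _ => ⟨j₀, le_rfl, fun q hq => absurd hq (Finset.notMem_empty q)⟩
      | @insert a s _ ih =>
        intro hs
        obtain ⟨k₁, h₁, hk₁⟩ := ih (fun q hq => hs q (Finset.mem_insert_of_mem hq))
        have h0 : Algebra.TensorProduct.map (g j₀) (AlgHom.id R0 C) (MvPolynomial.aeval d a)
            = Algebra.TensorProduct.map (g j₀) (AlgHom.id R0 C) 0 := by
          rw [map_zero, hw a, hs a (Finset.mem_insert_self a s), map_zero]
        obtain ⟨k₂, h₂, hk₂⟩ := aux_exact R0 A f hf_id hf_comp R g hg hsurj hexact C j₀ _ _ h0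
        rw [map_zero] at hk₂
        obtain ⟨k, hkk1, hkk2⟩ := exists_ge_ge k₁ k₂
        refine ⟨k, h₁.trans hkk1, fun q hq => ?_⟩
        rcases Finset.mem_insert.1 hq with rfl | hq'
        · have h3 : f j₀ k (h₁.trans hkk1) = (f k₂ k hkk2).comp (f j₀ k₂ h₂) :=
            (hf_comp _ _ _ _ _).symm
          rw [h3, map_map_aux, hk₂, map_zero]
        · have h3 : f j₀ k (h₁.trans hkk1) = (f k₁ k hkk1).comp (f j₀ k₁ h₁) :=
            (hf_comp _ _ _ _ _).symm
          rw [h3, map_map_aux, hk₁ q hq', map_zero]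
    obtain ⟨k, hk, hkill⟩ := key t hker'
    set w' : MvPolynomial (Fin n) R0 →ₐ[R0] (A k) ⊗[R0] C :=
      (Algebra.TensorProduct.map (f j₀ k hk) (AlgHom.id R0 C)).comp (MvPolynomial.aeval d)
      with hw'
    have hkerw : ∀ q ∈ RingHom.ker p.toRingHom, w' q = 0 := by
      intro q hq
      rw [← ht] at hq
      have hle : Ideal.span (t : Set (MvPolynomial (Fin n) R0)) ≤ RingHom.ker w'.toRingHom :=
        Ideal.span_le.mpr (fun q hq => by
          simp only [SetLike.mem_coe, RingHom.mem_ker]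
          exact hkill q hq)
      exact hle hq
    set eq1 := Ideal.quotientKerAlgEquivOfSurjective hp with heq1
    set v : B →ₐ[R0] (A k) ⊗[R0] C :=
      (Ideal.Quotient.liftₐ (RingHom.ker p.toRingHom) w' hkerw).comp eq1.symm.toAlgHom with hv'
    have hv : ∀ q, v (p q) = w' q := by
      intro q
      have h1 : eq1 (Ideal.Quotient.mk (RingHom.ker p.toRingHom) q) = p q := by
        rw [heq1]
        simp only [Ideal.quotientKerAlgEquivOfSurjective, Ideal.quotientKerAlgEquivOfRightInverse]
        erw [RingHom.quotientKerEquivOfRightInverse.apply]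
      have h2 : eq1.symm (p q) = Ideal.Quotient.mk (RingHom.ker p.toRingHom) q := by
        rw [← h1]; exact eq1.symm_apply_apply _
      have h5 : (Ideal.Quotient.liftₐ (RingHom.ker p.toRingHom) w' hkerw)
          (eq1.symm (p q)) = w' q := by
        rw [h2, Ideal.Quotient.liftₐ_apply]
        rfl
      exact h5
    set φ : (A k) ⊗[R0] B →ₐ[A k] (A k) ⊗[R0] C :=
      Algebra.TensorProduct.lift (Algebra.TensorProduct.includeLeft) v
        (fun _ _ => Commute.all _ _) with hφ
    refine ⟨k, φ, ?_⟩
    have hφ1 : ∀ b : B, φ ((1 : A k) ⊗ₜ[R0] b) = v b := by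
      intro b
      rw [hφ]
      rw [Algebra.TensorProduct.lift_tmul, Algebra.TensorProduct.includeLeft_apply,
        ← Algebra.TensorProduct.one_def, one_mul]
    have hb : ∀ b : B, χ ((1 : R) ⊗ₜ[R0] b) =
        Algebra.TensorProduct.map (g k) (AlgHom.id R0 C) (v b) := by
      intro b
      obtain ⟨q, rfl⟩ := hp b
      rw [hv q, hw']
      simp only [AlgHom.comp_apply]
      rw [← map_map_aux (f j₀ k hk) (g k) (MvPolynomial.aeval d q), hg j₀ k hk, hw q]
      rfl
    intro x
    induction x using TensorProduct.induction_on with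
    | zero => simp
    | add x y hx hy => simp only [map_add, hx, hy]
    | tmul a b =>
      have hsplit : (a ⊗ₜ[R0] b : (A k) ⊗[R0] B) = (a ⊗ₜ[R0] 1) * ((1 : A k) ⊗ₜ[R0] b) := by
        rw [Algebra.TensorProduct.tmul_mul_tmul, mul_one, one_mul]
      have hleft : χ (Algebra.TensorProduct.map (g k) (AlgHom.id R0 B) (a ⊗ₜ[R0] (1:B)))
          = Algebra.TensorProduct.map (g k) (AlgHom.id R0 C) (φ (a ⊗ₜ[R0] (1:B))) := by
        have h1 : Algebra.TensorProduct.map (g k) (AlgHom.id R0 B) (a ⊗ₜ[R0] (1:B))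
            = algebraMap R (R ⊗[R0] B) (g k a) := by
          rw [Algebra.TensorProduct.map_tmul, Algebra.TensorProduct.algebraMap_apply]
          simp
        have h2 : φ (a ⊗ₜ[R0] (1:B)) = a ⊗ₜ[R0] (1:C) := by
          have h3 : (a ⊗ₜ[R0] (1:B)) = algebraMap (A k) ((A k) ⊗[R0] B) a := by
            rw [Algebra.TensorProduct.algebraMap_apply]; simp
          rw [h3, AlgHom.commutes, Algebra.TensorProduct.algebraMap_apply]; simp
        rw [h1, AlgHom.commutes, h2, Algebra.TensorProduct.map_tmul]
        rw [Algebra.TensorProduct.algebraMap_apply]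
        simp
      have hright : χ (Algebra.TensorProduct.map (g k) (AlgHom.id R0 B) ((1 : A k) ⊗ₜ[R0] b))
          = Algebra.TensorProduct.map (g k) (AlgHom.id R0 C) (φ ((1 : A k) ⊗ₜ[R0] b)) := by
        rw [hφ1 b, Algebra.TensorProduct.map_tmul, map_one]
        exact hb b
      simp only [hsplit, map_mul, hleft, hright]
  · -- injectivity
    intro j φ ψ hφψ
    obtain ⟨n, p, hp, -⟩ := hB.out
    choose kr hkr heq using fun r : Fin n =>
      aux_exact R0 A f hf_id hf_comp R g hg hsurj hexact C j
        (φ ((1 : A j) ⊗ₜ[R0] p (MvPolynomial.X r)))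
        (ψ ((1 : A j) ⊗ₜ[R0] p (MvPolynomial.X r)))
        (hφψ _)
    obtain ⟨k, hk⟩ := (insert j (Finset.univ.image kr)).exists_le
    have hjk : j ≤ k := hk j (Finset.mem_insert_self _ _)
    have hkrk : ∀ r, kr r ≤ k := fun r =>
      hk _ (Finset.mem_insert_of_mem (Finset.mem_image_of_mem kr (Finset.mem_univ r)))
    refine ⟨k, hjk, ?_⟩
    have hX : ∀ r : Fin n,
        Algebra.TensorProduct.map (f j k hjk) (AlgHom.id R0 C)
          (φ ((1 : A j) ⊗ₜ[R0] p (MvPolynomial.X r))) =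
        Algebra.TensorProduct.map (f j k hjk) (AlgHom.id R0 C)
          (ψ ((1 : A j) ⊗ₜ[R0] p (MvPolynomial.X r))) := by
      intro r
      have hcomp : f j k hjk = (f (kr r) k (hkrk r)).comp (f j (kr r) (hkr r)) :=
        (hf_comp _ _ _ _ _).symm
      rw [hcomp, map_map_aux, map_map_aux, heq r]
    have hb : ∀ b : B,
        Algebra.TensorProduct.map (f j k hjk) (AlgHom.id R0 C) (φ ((1 : A j) ⊗ₜ[R0] b)) =
        Algebra.TensorProduct.map (f j k hjk) (AlgHom.id R0 C) (ψ ((1 : A j) ⊗ₜ[R0] b)) := by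
      have h1 : (((Algebra.TensorProduct.map (f j k hjk) (AlgHom.id R0 C)).comp
          ((φ.restrictScalars R0).comp Algebra.TensorProduct.includeRight)).comp p :
            MvPolynomial (Fin n) R0 →ₐ[R0] (A k) ⊗[R0] C) =
        ((Algebra.TensorProduct.map (f j k hjk) (AlgHom.id R0 C)).comp
          ((ψ.restrictScalars R0).comp Algebra.TensorProduct.includeRight)).comp p := by
        apply MvPolynomial.algHom_ext
        intro r
        simp only [AlgHom.comp_apply, Algebra.TensorProduct.includeRight_apply,
          AlgHom.coe_restrictScalars']
        exact hX r
      intro b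
      obtain ⟨q, rfl⟩ := hp b
      have h2 := AlgHom.congr_fun h1 q
      simpa only [AlgHom.comp_apply, Algebra.TensorProduct.includeRight_apply,
        AlgHom.coe_restrictScalars'] using h2
    intro x
    induction x using TensorProduct.induction_on with
    | zero => simp
    | add x y hx hy => rw [map_add, map_add, map_add, map_add, hx, hy]
    | tmul a b =>
      have hsplit : (a ⊗ₜ[R0] b : (A j) ⊗[R0] B) = (a ⊗ₜ[R0] 1) * ((1 : A j) ⊗ₜ[R0] b) := by
        rw [Algebra.TensorProduct.tmul_mul_tmul, mul_one, one_mul]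
      have ha : ∀ θ : ((A j) ⊗[R0] B) →ₐ[A j] ((A j) ⊗[R0] C),
          θ (a ⊗ₜ[R0] (1:B)) = a ⊗ₜ[R0] (1:C) := by
        intro θ
        have h3 : (a ⊗ₜ[R0] (1:B)) = algebraMap (A j) ((A j) ⊗[R0] B) a := by
          rw [Algebra.TensorProduct.algebraMap_apply]; simp
        rw [h3, AlgHom.commutes, Algebra.TensorProduct.algebraMap_apply]; simp
      simp only [hsplit, map_mul, ha φ, ha ψ, hb b]
end

section
/- Let A = colim A_i be a filtered colimit of commutative rings and let P be a finitely generated projective A-module. Then there exists an index i and a finitely generated projective A_i-module P_i such that P ≅ P_i ⊗_{A_i} A. -/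
/-!
STATEMENT 2: Let A = colim A_i be a filtered colimit of commutative rings and P a
finitely generated projective A-module.  Then there is an index i and a finitely
generated projective A_i-module P_i with P ≅ P_i ⊗_{A_i} A.
-/

open TensorProduct

theorem statement2
    {ι : Type u} [Preorder ι] [IsDirected ι (· ≤ ·)] [Nonempty ι]
    (A : ι → Type u) [∀ i, CommRing (A i)]
    (f : ∀ i j, i ≤ j → A i →+* A j)
    (hf_id : ∀ i, f i i le_rfl = RingHom.id (A i))
    (hf_comp : ∀ i j k (hij : i ≤ j) (hjk : j ≤ k),
      (f j k hjk).comp (f i j hij) = f i k (le_trans hij hjk))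
    (R : Type u) [CommRing R]
    (g : ∀ i, A i →+* R)
    (hg : ∀ i j (hij : i ≤ j), (g j).comp (f i j hij) = g i)
    (hsurj : ∀ x : R, ∃ i y, g i y = x)
    (hexact : ∀ i (x y : A i), g i x = g i y →
      ∃ j, ∃ hij : i ≤ j, f i j hij x = f i j hij y)
    (P : Type u) [AddCommGroup P] [Module R P]
    (hfin : Module.Finite R P) (hproj : Module.Projective R P) :
    ∃ (i : ι) (Pi : Type u) (_ : AddCommGroup Pi) (_ : Module (A i) Pi),
      Module.Finite (A i) Pi ∧ Module.Projective (A i) Pi ∧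
      (letI : Algebra (A i) R := (g i).toAlgebra
       Nonempty ((R ⊗[A i] Pi) ≃ₗ[R] P)) := by
  classical
  -- Step 1: present P as a retract of a finite free module
  obtain ⟨n, π, hπ⟩ := Module.Finite.exists_fin' R P
  obtain ⟨s, hs⟩ := Module.projective_lifting_property π LinearMap.id hπ
  have hπs : ∀ y : P, π (s y) = y := fun y => LinearMap.congr_fun hs y
  set E : (Fin n → R) →ₗ[R] (Fin n → R) := s ∘ₗ π with hEdef
  set M : Matrix (Fin n) (Fin n) R := LinearMap.toMatrix' E with hMdef
  have hEE : E ∘ₗ E = E := by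
    apply LinearMap.ext; intro x
    simp [hEdef, hπs]
  have hMM : M * M = M := by
    rw [hMdef, ← LinearMap.toMatrix'_comp, hEE]
  -- Step 2: lift the matrix entries to a common index i₀
  choose i0f yf hyf using fun p : Fin n × Fin n => hsurj (M p.1 p.2)
  obtain ⟨i₀, hi₀⟩ := Finset.exists_le (Finset.univ.image i0f)
  have hle : ∀ p : Fin n × Fin n, i0f p ≤ i₀ := fun p =>
    hi₀ _ (Finset.mem_image_of_mem _ (Finset.mem_univ p))
  set N : Matrix (Fin n) (Fin n) (A i₀) :=
    fun a b => f (i0f (a, b)) i₀ (hle (a, b)) (yf (a, b)) with hNdef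
  have hN : ∀ a b, g i₀ (N a b) = M a b := by
    intro a b
    have := RingHom.congr_fun (hg (i0f (a, b)) i₀ (hle (a, b))) (yf (a, b))
    simp only [RingHom.comp_apply] at this
    rw [hNdef]; rw [this, hyf]
  have hNN : ∀ a b, g i₀ ((N * N) a b) = g i₀ (N a b) := by
    intro a b
    rw [Matrix.mul_apply, map_sum]
    simp only [map_mul, hN]
    rw [← Matrix.mul_apply, hMM]
  -- Step 3: push forward so that the lifted matrix becomes idempotent
  choose jf hjf1 hjf2 using fun p : Fin n × Fin n =>
    hexact i₀ ((N * N) p.1 p.2) (N p.1 p.2) (hNN p.1 p.2)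
  obtain ⟨j₀, hj₀⟩ := Finset.exists_le (insert i₀ (Finset.univ.image jf))
  have hij₀ : i₀ ≤ j₀ := hj₀ _ (Finset.mem_insert_self _ _)
  have hjle : ∀ p : Fin n × Fin n, jf p ≤ j₀ := fun p =>
    hj₀ _ (Finset.mem_insert_of_mem (Finset.mem_image_of_mem _ (Finset.mem_univ p)))
  set N' : Matrix (Fin n) (Fin n) (A j₀) := N.map (f i₀ j₀ hij₀) with hN'def
  have hN'N' : N' * N' = N' := by
    ext a b
    rw [hN'def, ← Matrix.map_mul]
    show f i₀ j₀ hij₀ ((N * N) a b) = f i₀ j₀ hij₀ (N a b)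
    have h1 := RingHom.congr_fun
      (hf_comp i₀ (jf (a, b)) j₀ (hjf1 (a, b)) (hjle (a, b))) ((N * N) a b)
    have h2 := RingHom.congr_fun
      (hf_comp i₀ (jf (a, b)) j₀ (hjf1 (a, b)) (hjle (a, b))) (N a b)
    simp only [RingHom.comp_apply] at h1 h2
    rw [← h1, ← h2, hjf2 (a, b)]
  have hN'M : ∀ a b, g j₀ (N' a b) = M a b := by
    intro a b
    rw [hN'def]
    show g j₀ (f i₀ j₀ hij₀ (N a b)) = M a b
    have := RingHom.congr_fun (hg i₀ j₀ hij₀) (N a b)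
    simp only [RingHom.comp_apply] at this
    rw [this, hN]
  -- Step 4: the idempotent endomorphism over B := A j₀ and its image
  set e : (Fin n → A j₀) →ₗ[A j₀] (Fin n → A j₀) := Matrix.toLin' N' with hedef
  have hee : e ∘ₗ e = e := by
    rw [hedef, ← Matrix.toLin'_mul, hN'N']
  have heapp : ∀ x, e (e x) = e x := fun x => LinearMap.congr_fun hee x
  set Q := LinearMap.range e with hQdef
  set iQ : Q →ₗ[A j₀] (Fin n → A j₀) := Q.subtype with hiQdef
  set pQ : (Fin n → A j₀) →ₗ[A j₀] Q := e.rangeRestrict with hpQdef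
  have hpi : pQ ∘ₗ iQ = LinearMap.id := by
    apply LinearMap.ext
    rintro ⟨x, y, rfl⟩
    apply Subtype.ext
    simpa [hpQdef, hiQdef] using heapp y
  have hip : iQ ∘ₗ pQ = e := rfl
  have heiQ : e ∘ₗ iQ = iQ := by
    rw [← hip, LinearMap.comp_assoc, hpi, LinearMap.comp_id]
  -- Q is finite and projective over B
  have hQfin : Module.Finite (A j₀) Q := Module.Finite.range e
  have hQproj : Module.Projective (A j₀) Q := Module.Projective.of_split iQ pQ hpi
  -- Step 5: base change to R
  letI : Algebra (A j₀) R := (g j₀).toAlgebra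
  have halg : ∀ b : A j₀, algebraMap (A j₀) R b = g j₀ b := fun b => rfl
  set bB : Module.Basis (Fin n) (A j₀) (Fin n → A j₀) := Pi.basisFun (A j₀) (Fin n) with hbBdef
  set α : (R ⊗[A j₀] (Fin n → A j₀)) ≃ₗ[R] (Fin n → R) :=
    (bB.baseChange R).equiv (Pi.basisFun R (Fin n)) (Equiv.refl _) with hαdef
  have hα1 : ∀ k, α (1 ⊗ₜ[A j₀] (Pi.single k 1 : Fin n → A j₀)) = Pi.single k (1 : R) := by
    intro k
    have h1 : ((bB.baseChange R) k : R ⊗[A j₀] (Fin n → A j₀)) = 1 ⊗ₜ[A j₀] (Pi.single k 1) := by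
      rw [Module.Basis.baseChange_apply]
      simp [hbBdef]
    rw [hαdef, ← h1, Module.Basis.equiv_apply]
    simp
  have hα : ∀ m : Fin n → A j₀, α (1 ⊗ₜ[A j₀] m) = fun a => g j₀ (m a) := by
    intro m
    have hm : m = ∑ k, Pi.single k (m k) := by
      funext a
      rw [Fintype.sum_apply]
      simp [Pi.single_apply]
    rw [hm]
    rw [tmul_sum, map_sum]
    funext a
    rw [Fintype.sum_apply]
    have hterm : ∀ k, α (1 ⊗ₜ[A j₀] (Pi.single k (m k) : Fin n → A j₀)) a
        = g j₀ ((Pi.single k (m k) : Fin n → A j₀) a) := by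
      intro k
      have : (Pi.single k (m k) : Fin n → A j₀) = m k • (Pi.single k 1 : Fin n → A j₀) := by
        funext a'
        simp [Pi.single_apply, mul_comm]
      rw [this]
      have hsm : (1 : R) ⊗ₜ[A j₀] (m k • (Pi.single k 1 : Fin n → A j₀))
          = (g j₀ (m k)) • ((1 : R) ⊗ₜ[A j₀] (Pi.single k 1 : Fin n → A j₀)) := by
        rw [← smul_tmul, smul_tmul']
        congr 1
      rw [hsm, map_smul, hα1]
      by_cases hak : a = k <;> simp [Pi.single_apply, hak]
    rw [Finset.sum_congr rfl (fun k _ => hterm k), ← map_sum, ← Fintype.sum_apply, ← hm]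
  -- Step 6: the key compatibility : α ∘ baseChange e = E ∘ α
  have key : α.toLinearMap ∘ₗ (e.baseChange R) = E ∘ₗ α.toLinearMap := by
    apply (bB.baseChange R).ext
    intro k
    have h1 : ((bB.baseChange R) k : R ⊗[A j₀] (Fin n → A j₀)) = 1 ⊗ₜ[A j₀] (Pi.single k 1) := by
      rw [Module.Basis.baseChange_apply]; simp [hbBdef]
    rw [h1]
    simp only [LinearMap.comp_apply, LinearMap.baseChange_tmul, LinearEquiv.coe_coe]
    rw [hα, hα1]
    have heval : e (Pi.single k 1) = fun a => N' a k := by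
      rw [hedef]
      rw [Matrix.toLin'_apply, Matrix.mulVec_single]
      funext a; simp
    rw [heval]
    have hE : E = Matrix.toLin' M := by rw [hMdef, Matrix.toLin'_toMatrix']
    rw [hE, Matrix.toLin'_apply, Matrix.mulVec_single]
    funext a
    simp [hN'M]
  have key' : ∀ z, α (e.baseChange R z) = E (α z) := fun z => LinearMap.congr_fun key z
  -- Step 7: assemble the equivalence  R ⊗[A j₀] Q ≃ P
  set u : (R ⊗[A j₀] Q) →ₗ[R] P := π ∘ₗ (α.toLinearMap ∘ₗ (iQ.baseChange R)) with hudef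
  set v : P →ₗ[R] (R ⊗[A j₀] Q) := (pQ.baseChange R) ∘ₗ (α.symm.toLinearMap ∘ₗ s) with hvdef
  have hcomp1 : (iQ.baseChange R) ∘ₗ (pQ.baseChange R) = e.baseChange R := by
    rw [← LinearMap.baseChange_comp, hip]
  have hcomp2 : (pQ.baseChange R) ∘ₗ (e.baseChange R) ∘ₗ (iQ.baseChange R)
      = LinearMap.id := by
    rw [← LinearMap.baseChange_comp, ← LinearMap.baseChange_comp, heiQ, hpi,
      LinearMap.baseChange_id]
  have huv : u ∘ₗ v = LinearMap.id := by
    apply LinearMap.ext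
    intro x
    simp only [hudef, hvdef, LinearMap.comp_apply, LinearEquiv.coe_coe, LinearMap.id_apply]
    rw [← LinearMap.comp_apply (iQ.baseChange R) (pQ.baseChange R), hcomp1]
    rw [key', LinearEquiv.apply_symm_apply]
    simp [hEdef, hπs]
  have hvu : v ∘ₗ u = LinearMap.id := by
    apply LinearMap.ext
    intro z
    simp only [hudef, hvdef, LinearMap.comp_apply, LinearEquiv.coe_coe, LinearMap.id_apply]
    have h1 : s (π (α ((iQ.baseChange R) z))) = E (α ((iQ.baseChange R) z)) := rfl
    rw [h1, ← key', LinearEquiv.symm_apply_apply]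
    exact LinearMap.congr_fun hcomp2 z
  refine ⟨j₀, Q, inferInstance, inferInstance, hQfin, hQproj,
    ⟨LinearEquiv.ofLinear u v huv hvu⟩⟩
end

section
/- Let A = colim A_i be a filtered colimit of commutative rings, let M_i be a finitely presented A_i-module for some i, and suppose M_i ⊗_{A_i} A = 0. Then there exists j ≥ i with M_i ⊗_{A_i} A_j = 0. -/
/-!
STATEMENT 3: Let A = colim A_j be a filtered colimit of commutative rings, M a
finitely presented module over one of the terms, and suppose M ⊗ A = 0.  Then
M ⊗ A_j = 0 for some later index j.

We encode the situation relative to the fixed index i of the statement: the base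
ring R0 plays the role of A_i, the (A j) form the filtered system of R0-algebras
indexed by {j ≥ i}, with colimit R = A, and M is a finitely presented R0-module.
-/

open TensorProduct

/-- Vanishing criterion: if every standard basis vector of `B^n` is a `B`-linear
combination of the (images of the) relations, then `B ⊗ M = 0`. -/
lemma aux_subsingleton {R0 B : Type*} [CommRing R0] [CommRing B] [Algebra R0 B]
    {M : Type*} [AddCommGroup M] [Module R0 M] {n m : ℕ}
    (π : (Fin n → R0) →ₗ[R0] M) (hπ : Function.Surjective π)
    (r : Fin m → (Fin n → R0)) (hr : ∀ l, π (r l) = 0)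
    (c : Fin n → Fin m → B)
    (h : ∀ k j, algebraMap R0 B ((Pi.single k 1 : Fin n → R0) j) =
      ∑ l, c k l * algebraMap R0 B (r l j)) :
    Subsingleton (B ⊗[R0] M) := by
  classical
  set u : Fin n → B ⊗[R0] M := fun j => (1 : B) ⊗ₜ[R0] π (Pi.single j 1) with hu
  have step1 : ∀ v : Fin n → R0,
      (1 : B) ⊗ₜ[R0] π v = ∑ j, algebraMap R0 B (v j) • u j := by
    intro v
    have hv : (∑ j, v j • (Pi.single j 1 : Fin n → R0)) = v := by
      ext k
      simp [Pi.single_apply]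
    conv_lhs => rw [← hv]
    rw [map_sum]
    rw [tmul_sum]
    refine Finset.sum_congr rfl fun j _ => ?_
    rw [map_smul, tmul_smul, algebraMap_smul]
  have step3 : ∀ l, ∑ j, algebraMap R0 B (r l j) • u j = 0 := by
    intro l
    rw [← step1, hr l, tmul_zero]
  have step4 : ∀ k, u k = 0 := by
    intro k
    calc u k = (1 : B) ⊗ₜ[R0] π (Pi.single k 1) := rfl
      _ = ∑ j, algebraMap R0 B ((Pi.single k 1 : Fin n → R0) j) • u j := step1 _
      _ = ∑ j, (∑ l, c k l * algebraMap R0 B (r l j)) • u j := by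
          refine Finset.sum_congr rfl fun j _ => ?_
          rw [h]
      _ = ∑ l, c k l • (∑ j, algebraMap R0 B (r l j) • u j) := by
          simp_rw [Finset.sum_smul, Finset.smul_sum, mul_smul]
          exact Finset.sum_comm
      _ = 0 := by
          refine Finset.sum_eq_zero fun l _ => ?_
          rw [step3, smul_zero]
  refine subsingleton_of_forall_eq 0 fun x => ?_
  induction x using TensorProduct.induction_on with
  | zero => rfl
  | tmul b mm =>
      obtain ⟨v, rfl⟩ := hπ mm
      have hb : b ⊗ₜ[R0] π v = b • ((1 : B) ⊗ₜ[R0] π v) := by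
        rw [smul_tmul', smul_eq_mul, mul_one]
      rw [hb, step1]
      simp [step4]
  | add x y hx hy => rw [hx, hy, add_zero]

/-- Extraction of coefficients: if `B ⊗ M = 0` then every standard basis vector is a
`B`-linear combination of the relations. -/
lemma aux_coeffs {R0 B : Type*} [CommRing R0] [CommRing B] [Algebra R0 B]
    {M : Type*} [AddCommGroup M] [Module R0 M] {n m : ℕ}
    (π : (Fin n → R0) →ₗ[R0] M) (hπ : Function.Surjective π)
    (r : Fin m → (Fin n → R0))
    (hker : Submodule.span R0 (Set.range r) = LinearMap.ker π)
    (hzero : Subsingleton (B ⊗[R0] M)) (k : Fin n) :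
    ∃ c : Fin m → B, ∀ j, algebraMap R0 B ((Pi.single k 1 : Fin n → R0) j) =
      ∑ l, c l * algebraMap R0 B (r l j) := by
  classical
  have hex : Function.Exact ((LinearMap.ker π).subtype) π := by
    rw [LinearMap.exact_iff, Submodule.range_subtype]
  have hT := lTensor_exact B hex hπ
  have h0 : (LinearMap.lTensor B π)
      ((1 : B) ⊗ₜ[R0] (Pi.single k 1 : Fin n → R0)) = 0 := Subsingleton.elim _ _
  obtain ⟨z, hz⟩ := (hT _).mp h0
  set S := Submodule.span B (Set.range fun l => (1 : B) ⊗ₜ[R0] r l) with hS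
  have hmem : ∀ w : B ⊗[R0] (LinearMap.ker π),
      (LinearMap.lTensor B (LinearMap.ker π).subtype) w ∈ S := by
    intro w
    induction w using TensorProduct.induction_on with
    | zero => simp
    | tmul b y =>
        rw [LinearMap.lTensor_tmul]
        have key : ∀ x ∈ Submodule.span R0 (Set.range r), b ⊗ₜ[R0] x ∈ S := by
          intro x hx
          induction hx using Submodule.span_induction with
          | mem x hx =>
              obtain ⟨l, rfl⟩ := hx
              have hb : b ⊗ₜ[R0] r l = b • ((1 : B) ⊗ₜ[R0] r l) := by
                rw [smul_tmul', smul_eq_mul, mul_one]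
              rw [hb]
              exact Submodule.smul_mem _ _ (Submodule.subset_span ⟨l, rfl⟩)
          | zero => rw [tmul_zero]; exact zero_mem _
          | add x y _ _ hx hy => rw [tmul_add]; exact add_mem hx hy
          | smul a x _ hx =>
              rw [tmul_smul, ← algebraMap_smul B a]
              exact Submodule.smul_mem _ _ hx
        exact key y.1 (by rw [hker]; exact y.2)
    | add x y hx hy => rw [map_add]; exact add_mem hx hy
  have hk : (1 : B) ⊗ₜ[R0] (Pi.single k 1 : Fin n → R0) ∈ S := hz ▸ hmem z
  obtain ⟨c, hc⟩ := (Submodule.mem_span_range_iff_exists_fun B).mp hk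
  refine ⟨c, fun j => ?_⟩
  have := congrFun (congrArg (TensorProduct.piScalarRightHom R0 B B (Fin n)) hc) j
  simp only [map_sum, map_smul, TensorProduct.piScalarRightHom_tmul,
    Finset.sum_apply, Pi.smul_apply, smul_eq_mul, Algebra.smul_def, mul_one] at this
  exact this.symm

theorem statement3
    {ι : Type u} [Preorder ι] [IsDirected ι (· ≤ ·)] [Nonempty ι]
    (R0 : Type u) [CommRing R0]
    (A : ι → Type u) [∀ i, CommRing (A i)] [∀ i, Algebra R0 (A i)]
    (f : ∀ i j, i ≤ j → A i →ₐ[R0] A j)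
    (hf_id : ∀ i, f i i le_rfl = AlgHom.id R0 (A i))
    (hf_comp : ∀ i j k (hij : i ≤ j) (hjk : j ≤ k),
      (f j k hjk).comp (f i j hij) = f i k (le_trans hij hjk))
    (R : Type u) [CommRing R] [Algebra R0 R]
    (g : ∀ i, A i →ₐ[R0] R)
    (hg : ∀ i j (hij : i ≤ j), (g j).comp (f i j hij) = g i)
    (hsurj : ∀ x : R, ∃ i y, g i y = x)
    (hexact : ∀ i (x y : A i), g i x = g i y →
      ∃ j, ∃ hij : i ≤ j, f i j hij x = f i j hij y)
    (M : Type u) [AddCommGroup M] [Module R0 M]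
    (hM : Module.FinitePresentation R0 M)
    (hzero : Subsingleton (R ⊗[R0] M)) :
    ∃ j, Subsingleton ((A j) ⊗[R0] M) := by
  classical
  haveI := hM
  -- finite presentation: generators and relations
  obtain ⟨n, s, hs⟩ := Module.Finite.exists_fin (R := R0) (M := M)
  set π : (Fin n → R0) →ₗ[R0] M := Fintype.linearCombination R0 s with hπdef
  have hπ : Function.Surjective π := by
    intro x
    have hx : x ∈ Submodule.span R0 (Set.range s) := hs ▸ Submodule.mem_top
    obtain ⟨c, hc⟩ := (Submodule.mem_span_range_iff_exists_fun R0).mp hx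
    exact ⟨c, by rw [hπdef, Fintype.linearCombination_apply]; exact hc⟩
  have hkfg : (LinearMap.ker π).FG := Module.FinitePresentation.fg_ker π hπ
  obtain ⟨m, r, hker⟩ := Submodule.fg_iff_exists_fin_generating_family.mp hkfg
  have hr : ∀ l, π (r l) = 0 := by
    intro l
    have : r l ∈ LinearMap.ker π := hker ▸ Submodule.subset_span ⟨l, rfl⟩
    exact this
  -- coefficients over R
  have hcoef := fun k => aux_coeffs π hπ r hker hzero k
  choose c hc using hcoef
  -- lift the coefficients to some finite stage
  choose idx y hy using fun k l => hsurj (c k l)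
  obtain ⟨j0, hj0⟩ :=
    Finset.exists_le (Finset.univ.image fun p : Fin n × Fin m => idx p.1 p.2)
  have hle : ∀ k l, idx k l ≤ j0 := fun k l =>
    hj0 _ (Finset.mem_image_of_mem _ (Finset.mem_univ (k, l)))
  set c0 : Fin n → Fin m → A j0 := fun k l => f (idx k l) j0 (hle k l) (y k l) with hc0
  have hgc0 : ∀ k l, g j0 (c0 k l) = c k l := by
    intro k l
    have h2 := AlgHom.congr_fun (hg (idx k l) j0 (hle k l)) (y k l)
    rw [AlgHom.comp_apply] at h2
    simp only [hc0]
    rw [h2]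
    exact hy k l
  -- the defects at stage j0
  set d : Fin n → Fin n → A j0 := fun k j =>
    algebraMap R0 (A j0) ((Pi.single k 1 : Fin n → R0) j) -
      ∑ l, c0 k l * algebraMap R0 (A j0) (r l j) with hd
  have hgd : ∀ k j, g j0 (d k j) = 0 := by
    intro k j
    rw [hd]
    simp only [map_sub, map_sum, map_mul, hgc0, AlgHom.commutes]
    rw [sub_eq_zero]
    exact hc k j
  -- kill the defects at a later stage
  have hstage : ∀ k j, ∃ j', ∃ h : j0 ≤ j', f j0 j' h (d k j) = 0 := by
    intro k j
    obtain ⟨j', hjj, hfd⟩ := hexact j0 (d k j) 0 (by rw [hgd, map_zero])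
    exact ⟨j', hjj, by rw [hfd, map_zero]⟩
  choose jj hjj hfd using hstage
  obtain ⟨j1, hj1⟩ :=
    Finset.exists_le (insert j0 (Finset.univ.image fun p : Fin n × Fin n => jj p.1 p.2))
  have hj01 : j0 ≤ j1 := hj1 _ (Finset.mem_insert_self _ _)
  have hle1 : ∀ k j, jj k j ≤ j1 := fun k j =>
    hj1 _ (Finset.mem_insert_of_mem (Finset.mem_image_of_mem _ (Finset.mem_univ (k, j))))
  have hzero1 : ∀ k j, f j0 j1 hj01 (d k j) = 0 := by
    intro k j
    have hcomp := AlgHom.congr_fun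
      (hf_comp j0 (jj k j) j1 (hjj k j) (hle1 k j)) (d k j)
    calc f j0 j1 hj01 (d k j)
        = f (jj k j) j1 (hle1 k j) (f j0 (jj k j) (hjj k j) (d k j)) := hcomp.symm
      _ = 0 := by rw [hfd, map_zero]
  refine ⟨j1, aux_subsingleton π hπ r hr (fun k l => f j0 j1 hj01 (c0 k l)) ?_⟩
  intro k j
  have h1 := hzero1 k j
  rw [hd] at h1
  simp only [map_sub, map_sum, map_mul, AlgHom.commutes] at h1
  rw [sub_eq_zero] at h1
  exact h1
end

section
/- Let A be a commutative ring, B a finitely presented commutative A-algebra, and f : B → B an A-algebra idempotent endomorphism (f ∘ f = f). Then f splits: there exists a commutative A-algebra C with A-algebra maps u : B → C and v : C → B such that u ∘ v = id_C and v ∘ u = f; moreover C is finitely presented over A. -/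
/-!
STATEMENT 4: Let A be a commutative ring, B a finitely presented commutative
A-algebra and f : B → B an idempotent A-algebra endomorphism.  Then f splits:
there are an A-algebra C and A-algebra maps u : B → C, v : C → B with
u ∘ v = id_C and v ∘ u = f; moreover C is finitely presented over A.
-/

theorem statement4
    (A : Type u) (B : Type u) [CommRing A] [CommRing B] [Algebra A B]
    (hB : Algebra.FinitePresentation A B)
    (f : B →ₐ[A] B) (hf : f.comp f = f) :
    ∃ (C : Type u) (_ : CommRing C) (_ : Algebra A C)
      (u : B →ₐ[A] C) (v : C →ₐ[A] B),
      u.comp v = AlgHom.id A C ∧ v.comp u = f ∧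
      Algebra.FinitePresentation A C := by
  haveI : Algebra.FinitePresentation A B := hB
  -- a finite generating set of B
  obtain ⟨s, hs⟩ := (Algebra.FiniteType.of_finitePresentation (R := A) (A := B)).out
  set I : Ideal B := Ideal.span ((fun x => x - f x) '' ↑s) with hI
  have hIfg : I.FG := Submodule.fg_span ((s.finite_toSet.image _))
  -- every element x satisfies x - f x ∈ I
  have key : ∀ x : B, x - f x ∈ I := by
    intro x
    let S : Subalgebra A B :=
      { carrier := {x : B | x - f x ∈ I}
        add_mem' := by
          intro a b ha hb
          simpa [add_sub_add_comm] using I.add_mem ha hb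
        zero_mem' := by simp
        one_mem' := by simp
        mul_mem' := by
          intro a b ha hb
          have h2 : a * b - f (a * b) = a * (b - f b) + f b * (a - f a) := by
            simp only [map_mul]; ring
          show a * b - f (a * b) ∈ I
          rw [h2]
          exact I.add_mem (I.mul_mem_left a hb) (I.mul_mem_left (f b) ha)
        algebraMap_mem' := fun a => by
          simp only [Set.mem_setOf_eq, AlgHom.commutes, sub_self]
          exact I.zero_mem }
    have hsS : (↑s : Set B) ⊆ S := by
      intro y hy
      exact Ideal.subset_span ⟨y, hy, rfl⟩
    have : x ∈ S := by
      have := Algebra.adjoin_le (S := S) hsS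
      rw [hs] at this
      exact this trivial
    exact this
  -- I = ker f
  have hIker : I = RingHom.ker f.toRingHom := by
    apply le_antisymm
    · rw [hI, Ideal.span_le]
      rintro _ ⟨y, -, rfl⟩
      have : f (y - f y) = 0 := by
        have := congrArg (fun g : B →ₐ[A] B => g y) hf
        simp only [AlgHom.comp_apply] at this
        simp [map_sub, this]
      exact this
    · intro x hx
      have hx0 : f x = 0 := hx
      have := key x
      rwa [hx0, sub_zero] at this
  refine ⟨B ⧸ I, inferInstance, inferInstance, Ideal.Quotient.mkₐ A I,
    Ideal.Quotient.liftₐ I f (fun a ha => by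
      rw [hIker] at ha; exact ha), ?_, ?_, ?_⟩
  · apply Ideal.Quotient.algHom_ext
    ext x
    simp only [AlgHom.comp_apply, Ideal.Quotient.liftₐ_apply, Ideal.Quotient.mkₐ_eq_mk,
      Ideal.Quotient.lift_mk, AlgHom.coe_toRingHom, AlgHom.id_apply]
    rw [Ideal.Quotient.eq]
    change f x - x ∈ I
    simpa [neg_sub] using I.neg_mem (key x)
  · ext x
    rfl
  · exact Algebra.FinitePresentation.of_surjective
      (Ideal.Quotient.mkₐ_surjective A I) (by rw [AlgHom.toRingHom_eq_coe]; rw [Ideal.Quotient.mkₐ_ker]; exact hIfg)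
end

section
/- Let A be a commutative ring and B a commutative A-algebra. If B is a retract (in the category of A-algebras) of a finitely presented A-algebra, then B is finitely presented over A. -/
lemma sub_aeval_mem_span {A : Type*} [CommRing A] {σ : Type*}
    (q : σ → MvPolynomial σ A) (p : MvPolynomial σ A) :
    p - MvPolynomial.aeval q p ∈ Ideal.span (Set.range fun i => MvPolynomial.X i - q i) := by
  induction p using MvPolynomial.induction_on with
  | C a => simp [MvPolynomial.algebraMap_eq]
  | add p r hp hr =>
      have : p + r - MvPolynomial.aeval q (p + r)
          = (p - MvPolynomial.aeval q p) + (r - MvPolynomial.aeval q r) := by ring_nf; simp; ring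
      rw [this]; exact Ideal.add_mem _ hp hr
  | mul_X p i hp =>
      have : p * MvPolynomial.X i - MvPolynomial.aeval q (p * MvPolynomial.X i)
          = p * (MvPolynomial.X i - q i) + (p - MvPolynomial.aeval q p) * q i := by
        simp; ring
      rw [this]
      exact Ideal.add_mem _
        (Ideal.mul_mem_left _ _ (Ideal.subset_span ⟨i, rfl⟩))
        (Ideal.mul_mem_right _ _ hp)

theorem statement5
    (A : Type u) (B : Type u) (B' : Type u)
    [CommRing A] [CommRing B] [CommRing B'] [Algebra A B] [Algebra A B']
    (hB' : Algebra.FinitePresentation A B')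
    (u : B →ₐ[A] B') (v : B' →ₐ[A] B) (hvu : v.comp u = AlgHom.id A B) :
    Algebra.FinitePresentation A B := by
  obtain ⟨n, f, hfsurj, hfker⟩ := hB'.out
  have hv : Function.Surjective v := by
    intro b; exact ⟨u b, by simpa using congrArg (fun g => g b) hvu⟩
  -- choose preimages h i of u (v (f (X i)))
  choose h hh using fun i => hfsurj (u (v (f (MvPolynomial.X i))))
  obtain ⟨s, hs⟩ := hfker
  have key : RingHom.ker (v.comp f).toRingHom
      = Ideal.span (↑s ∪ Set.range fun i => MvPolynomial.X i - h i) := by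
    have hcomp : ∀ p : MvPolynomial (Fin n) A,
        f (MvPolynomial.aeval h p) = u (v (f p)) := by
      intro p
      have : (f.comp (MvPolynomial.aeval h : MvPolynomial (Fin n) A →ₐ[A] _))
          = (u.comp v).comp f := by
        apply MvPolynomial.algHom_ext
        intro i
        simp [hh]
      simpa using congrArg (fun g : MvPolynomial (Fin n) A →ₐ[A] B' => g p) this
    apply le_antisymm
    · intro p hp
      have hp' : v (f p) = 0 := hp
      have h1 : p - MvPolynomial.aeval h p
          ∈ Ideal.span (Set.range fun i => MvPolynomial.X i - h i) :=
        sub_aeval_mem_span h p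
      have h2 : MvPolynomial.aeval h p ∈ RingHom.ker f.toRingHom := by
        rw [RingHom.mem_ker]
        show f (MvPolynomial.aeval h p) = 0
        rw [hcomp p, hp', map_zero]
      have h2' : MvPolynomial.aeval h p
          ∈ Ideal.span (↑s : Set (MvPolynomial (Fin n) A)) := by rw [hs]; exact h2
      have := Ideal.add_mem _
        (Ideal.span_mono Set.subset_union_right h1)
        (Ideal.span_mono Set.subset_union_left h2')
      simpa using this
    · rw [Ideal.span_le, Set.union_subset_iff]
      constructor
      · intro x hx
        have : x ∈ RingHom.ker f.toRingHom := by rw [← hs]; exact Ideal.subset_span hx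
        simp only [RingHom.mem_ker] at this
        show v (f x) = 0
        rw [show f x = 0 from this, map_zero]
      · rintro _ ⟨i, rfl⟩
        simp only [SetLike.mem_coe, RingHom.mem_ker, AlgHom.toRingHom_eq_coe,
          RingHom.coe_coe, AlgHom.comp_apply, map_sub]
        rw [hh i]
        have := congrArg (fun g => g (v (f (MvPolynomial.X i)))) hvu
        simp at this
        simp [this]
  have hkerfg : (RingHom.ker (v.comp f).toRingHom).FG := by
    rw [key]
    exact Submodule.fg_span (s.finite_toSet.union (Set.finite_range _))
  exact Algebra.FinitePresentation.of_surjective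
    (f := v.comp f) (by simpa [AlgHom.coe_comp] using hv.comp hfsurj) hkerfg
end

section
/- Let A = colim A_i be a filtered colimit of commutative rings. Then the natural functor from the filtered colimit of the categories of finitely generated projective A_i-modules to the category of finitely generated projective A-modules is an equivalence: it is essentially surjective, and for finitely generated projective A_i-modules P, Q, one has colim_{j≥i} Hom_{A_j}(P ⊗ A_j, Q ⊗ A_j) ≅ Hom_A(P ⊗ A, Q ⊗ A). -/
/-!
STATEMENT 14: Let A = colim A_j be a filtered colimit of commutative rings.  The
natural functor colim (finitely generated projective A_j-modules) →
(finitely generated projective A-modules) is an equivalence: it is essentially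
surjective, and for finitely generated projective modules P, Q over a term of the
system one has colim_{j} Hom_{A_j}(P ⊗ A_j, Q ⊗ A_j) ≅ Hom_A(P ⊗ A, Q ⊗ A).

We encode the situation relative to the fixed index i of the hom statement: the
base ring R0 plays the role of A_i, (A j) is the filtered system of R0-algebras
with colimit R = A, P and Q are finitely generated projective R0-modules.
Fullness/faithfulness is expressed via the canonical comparison maps
`TensorProduct.map (g j).toLinearMap LinearMap.id` to the colimit level.
-/

open TensorProduct



section Helpers

variable {R0 : Type*} [CommRing R0]
variable {A B C : Type*} [CommRing A] [CommRing B] [CommRing C]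
variable [Algebra R0 A] [Algebra R0 B] [Algebra R0 C]
variable {M N : Type*} [AddCommGroup M] [Module R0 M] [AddCommGroup N] [Module R0 N]

lemma Tm_tmul (σ : A →ₐ[R0] B) (a : A) (m : M) :
    TensorProduct.map σ.toLinearMap (LinearMap.id : M →ₗ[R0] M) (a ⊗ₜ m) = σ a ⊗ₜ m := by
  simp

lemma Tm_smul (σ : A →ₐ[R0] B) (a : A) (x : A ⊗[R0] M) :
    TensorProduct.map σ.toLinearMap (LinearMap.id : M →ₗ[R0] M) (a • x)
      = σ a • TensorProduct.map σ.toLinearMap (LinearMap.id : M →ₗ[R0] M) x := by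
  induction x with
  | zero => simp
  | tmul b m => simp [smul_tmul', smul_eq_mul]
  | add x y hx hy => simp [smul_add, hx, hy]

lemma Tm_baseChange (σ : A →ₐ[R0] B) (ψ : M →ₗ[R0] N) (x : A ⊗[R0] M) :
    TensorProduct.map σ.toLinearMap (LinearMap.id : N →ₗ[R0] N) (ψ.baseChange A x)
      = ψ.baseChange B (TensorProduct.map σ.toLinearMap (LinearMap.id : M →ₗ[R0] M) x) := by
  induction x with
  | zero => simp
  | tmul a m => simp
  | add x y hx hy => simp [hx, hy]

lemma Tm_comp (σ : A →ₐ[R0] B) (τ : B →ₐ[R0] C) (x : A ⊗[R0] M) :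
    TensorProduct.map (τ.comp σ).toLinearMap (LinearMap.id : M →ₗ[R0] M) x
      = TensorProduct.map τ.toLinearMap (LinearMap.id : M →ₗ[R0] M)
        (TensorProduct.map σ.toLinearMap (LinearMap.id : M →ₗ[R0] M) x) := by
  induction x with
  | zero => simp
  | tmul a m => simp
  | add x y hx hy => simp only [map_add, hx, hy]

lemma Tm_basis (σ : A →ₐ[R0] B) (n : ℕ) (i : Fin n) :
    TensorProduct.map σ.toLinearMap (LinearMap.id : (Fin n → R0) →ₗ[R0] (Fin n → R0))
      ((Algebra.TensorProduct.basis A (Pi.basisFun R0 (Fin n))) i)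
      = (Algebra.TensorProduct.basis B (Pi.basisFun R0 (Fin n))) i := by
  simp [Algebra.TensorProduct.basis_apply]

lemma Tm_repr (σ : A →ₐ[R0] B) {n : ℕ} (x : A ⊗[R0] (Fin n → R0)) (i : Fin n) :
    (Algebra.TensorProduct.basis B (Pi.basisFun R0 (Fin n))).repr
      (TensorProduct.map σ.toLinearMap (LinearMap.id : (Fin n → R0) →ₗ[R0] (Fin n → R0)) x) i
      = σ ((Algebra.TensorProduct.basis A (Pi.basisFun R0 (Fin n))).repr x i) := by
  induction x with
  | zero => simp
  | tmul a v =>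
    rw [Tm_tmul, Algebra.TensorProduct.basis_repr_tmul, Algebra.TensorProduct.basis_repr_tmul,
      Finsupp.smul_apply, Finsupp.smul_apply, Finsupp.mapRange_apply, Finsupp.mapRange_apply,
      Pi.basisFun_repr, smul_eq_mul, smul_eq_mul, map_mul, AlgHom.commutes]
  | add x y hx hy => simp [hx, hy]

end Helpers

section Kernel

universe u

variable {ι : Type u} [Preorder ι] [IsDirected ι (· ≤ ·)] [Nonempty ι]
variable {R0 : Type u} [CommRing R0]
variable {A : ι → Type u} [∀ i, CommRing (A i)] [∀ i, Algebra R0 (A i)]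
variable (f : ∀ i j, i ≤ j → A i →ₐ[R0] A j)
variable {R : Type u} [CommRing R] [Algebra R0 R]
variable (g : ∀ i, A i →ₐ[R0] R)

lemma key_free
    (hf_comp : ∀ i j k (hij : i ≤ j) (hjk : j ≤ k),
      (f j k hjk).comp (f i j hij) = f i k (le_trans hij hjk))
    (hexact : ∀ i (x y : A i), g i x = g i y →
      ∃ j, ∃ hij : i ≤ j, f i j hij x = f i j hij y)
    (j : ι) (n : ℕ) (x : (A j) ⊗[R0] (Fin n → R0))
    (hx : TensorProduct.map (g j).toLinearMap LinearMap.id x = 0) :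
    ∃ k, ∃ hjk : j ≤ k, TensorProduct.map (f j k hjk).toLinearMap LinearMap.id x = 0 := by
  classical
  set bA := Algebra.TensorProduct.basis (A j) (Pi.basisFun R0 (Fin n)) with hbA
  have h0 : ∀ i, g j (bA.repr x i) = g j 0 := by
    intro i
    rw [map_zero]
    have h := Tm_repr (g j) x i
    rw [hx, map_zero] at h
    simpa using h.symm
  choose k' hk' hfk' using fun i => hexact j _ 0 (h0 i)
  obtain ⟨k, hk⟩ := Finset.exists_le (insert j (Finset.image k' Finset.univ))
  have hjk : j ≤ k := hk j (Finset.mem_insert_self _ _)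
  refine ⟨k, hjk, ?_⟩
  conv_lhs => rw [← bA.sum_repr x]
  rw [map_sum]
  refine Finset.sum_eq_zero fun i _ => ?_
  rw [Tm_smul]
  have h1 : k' i ≤ k :=
    hk (k' i) (Finset.mem_insert_of_mem (Finset.mem_image_of_mem _ (Finset.mem_univ i)))
  have h2 : f j k hjk (bA.repr x i) = 0 := by
    have h3 := DFunLike.congr_fun (hf_comp j (k' i) k (hk' i) h1) (bA.repr x i)
    simp only [AlgHom.coe_comp, Function.comp_apply] at h3
    rw [← h3, hfk' i, map_zero, map_zero]
  rw [h2, zero_smul]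

lemma key_split
    (hf_comp : ∀ i j k (hij : i ≤ j) (hjk : j ≤ k),
      (f j k hjk).comp (f i j hij) = f i k (le_trans hij hjk))
    (hexact : ∀ i (x y : A i), g i x = g i y →
      ∃ j, ∃ hij : i ≤ j, f i j hij x = f i j hij y)
    {n : ℕ} {V : Type u} [AddCommGroup V] [Module R0 V]
    (pV : (Fin n → R0) →ₗ[R0] V) (sV : V →ₗ[R0] (Fin n → R0))
    (hps : pV ∘ₗ sV = LinearMap.id)
    (j : ι) (z : (A j) ⊗[R0] V)
    (hz : TensorProduct.map (g j).toLinearMap LinearMap.id z = 0) :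
    ∃ k, ∃ hjk : j ≤ k, TensorProduct.map (f j k hjk).toLinearMap LinearMap.id z = 0 := by
  have h1 : TensorProduct.map (g j).toLinearMap LinearMap.id (sV.baseChange (A j) z) = 0 := by
    rw [Tm_baseChange, hz, map_zero]
  obtain ⟨k, hjk, hk⟩ := key_free f g hf_comp hexact j n _ h1
  refine ⟨k, hjk, ?_⟩
  rw [Tm_baseChange] at hk
  have h3 := congrArg (pV.baseChange (A k)) hk
  rwa [map_zero, ← LinearMap.comp_apply, ← LinearMap.baseChange_comp, hps,
    LinearMap.baseChange_id, LinearMap.id_apply] at h3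

end Kernel

set_option maxHeartbeats 1600000 in
theorem statement14
    {ι : Type u} [Preorder ι] [IsDirected ι (· ≤ ·)] [Nonempty ι]
    (R0 : Type u) [CommRing R0]
    (A : ι → Type u) [∀ i, CommRing (A i)] [∀ i, Algebra R0 (A i)]
    (f : ∀ i j, i ≤ j → A i →ₐ[R0] A j)
    (hf_id : ∀ i, f i i le_rfl = AlgHom.id R0 (A i))
    (hf_comp : ∀ i j k (hij : i ≤ j) (hjk : j ≤ k),
      (f j k hjk).comp (f i j hij) = f i k (le_trans hij hjk))
    (R : Type u) [CommRing R] [Algebra R0 R]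
    (g : ∀ i, A i →ₐ[R0] R)
    (hg : ∀ i j (hij : i ≤ j), (g j).comp (f i j hij) = g i)
    (hsurj : ∀ x : R, ∃ i y, g i y = x)
    (hexact : ∀ i (x y : A i), g i x = g i y →
      ∃ j, ∃ hij : i ≤ j, f i j hij x = f i j hij y)
    (P : Type u) [AddCommGroup P] [Module R0 P]
    (Q : Type u) [AddCommGroup Q] [Module R0 Q]
    (hPfin : Module.Finite R0 P) (hPproj : Module.Projective R0 P)
    (hQfin : Module.Finite R0 Q) (hQproj : Module.Projective R0 Q) :
    -- essential surjectivity
    ((∀ (M : Type u) (_ : AddCommGroup M) (_ : Module R M),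
        Module.Finite R M → Module.Projective R M →
        ∃ (j : ι) (Mj : Type u) (_ : AddCommGroup Mj) (_ : Module (A j) Mj),
          Module.Finite (A j) Mj ∧ Module.Projective (A j) Mj ∧
          (letI : Algebra (A j) R := (g j).toRingHom.toAlgebra
           Nonempty ((R ⊗[A j] Mj) ≃ₗ[R] M)))
    -- surjectivity of the natural map on hom-sets
    ∧ (∀ χ : (R ⊗[R0] P) →ₗ[R] (R ⊗[R0] Q),
        ∃ (j : ι) (φ : ((A j) ⊗[R0] P) →ₗ[A j] ((A j) ⊗[R0] Q)),
          ∀ x, χ (TensorProduct.map (g j).toLinearMap LinearMap.id x) =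
            TensorProduct.map (g j).toLinearMap LinearMap.id (φ x))
    -- injectivity of the natural map on hom-sets
    ∧ (∀ (j : ι) (φ ψ : ((A j) ⊗[R0] P) →ₗ[A j] ((A j) ⊗[R0] Q)),
        (∀ x, TensorProduct.map (g j).toLinearMap LinearMap.id (φ x) =
          TensorProduct.map (g j).toLinearMap LinearMap.id (ψ x)) →
        ∃ (k : ι) (hjk : j ≤ k),
          ∀ x, TensorProduct.map (f j k hjk).toLinearMap LinearMap.id (φ x) =
            TensorProduct.map (f j k hjk).toLinearMap LinearMap.id (ψ x))) := by
  classical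
  have hgf : ∀ (j k : ι) (hjk : j ≤ k) (a : A j), g k (f j k hjk a) = g j a := by
    intro j k hjk a
    have := DFunLike.congr_fun (hg j k hjk) a
    simpa using this
  obtain ⟨nP, pP, hpP⟩ := Module.Finite.exists_fin' R0 P
  obtain ⟨sP, hsP⟩ := Module.projective_lifting_property pP LinearMap.id hpP
  obtain ⟨nQ, pQ, hpQ⟩ := Module.Finite.exists_fin' R0 Q
  obtain ⟨sQ, hsQ⟩ := Module.projective_lifting_property pQ LinearMap.id hpQ
  refine ⟨?_, ?_, ?_⟩
  · -- essential surjectivity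
    intro M _ _ hMfin hMproj
    obtain ⟨n, p, hp⟩ := Module.Finite.exists_fin' R M
    obtain ⟨s, hs⟩ := Module.projective_lifting_property p LinearMap.id hp
    have hps : ∀ m, p (s m) = m := fun m => by
      have := DFunLike.congr_fun hs m; simpa using this
    set e : (Fin n → R) →ₗ[R] (Fin n → R) := s ∘ₗ p with he
    have hee : e ∘ₗ e = e := by
      rw [he, LinearMap.comp_assoc, ← LinearMap.comp_assoc p s p, hs, LinearMap.id_comp]
    set Er : Matrix (Fin n) (Fin n) R := LinearMap.toMatrix' e with hEr
    choose j0 y0 hy0 using fun q : Fin n × Fin n => hsurj (Er q.1 q.2)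
    obtain ⟨j, hj⟩ := Finset.exists_le (Finset.image j0 Finset.univ)
    have hj' : ∀ q, j0 q ≤ j := fun q => hj _ (Finset.mem_image_of_mem _ (Finset.mem_univ q))
    set c : Matrix (Fin n) (Fin n) (A j) :=
      Matrix.of fun a b => f (j0 (a, b)) j (hj' _) (y0 (a, b)) with hcdef
    have hgc : ∀ a b, g j (c a b) = Er a b := by
      intro a b
      show g j (f (j0 (a, b)) j (hj' _) (y0 (a, b))) = Er a b
      rw [hgf]; exact hy0 (a, b)
    have hErEr : Er * Er = Er := by
      rw [hEr, ← LinearMap.toMatrix'_comp, hee]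
    have hEE : ∀ a b, g j ((c * c) a b) = g j (c a b) := by
      intro a b
      have h1 : g j ((c * c) a b) = ∑ x, Er a x * Er x b := by
        rw [Matrix.mul_apply, map_sum]
        exact Finset.sum_congr rfl fun x _ => by rw [map_mul, hgc, hgc]
      rw [h1, ← Matrix.mul_apply, hErEr, hgc]
    choose k' hk' hfk' using fun q : Fin n × Fin n =>
      hexact j ((c * c) q.1 q.2) (c q.1 q.2) (hEE q.1 q.2)
    obtain ⟨k, hk⟩ := Finset.exists_le (insert j (Finset.image k' Finset.univ))
    have hjk : j ≤ k := hk j (Finset.mem_insert_self _ _)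
    set c' : Matrix (Fin n) (Fin n) (A k) := c.map (f j k hjk) with hc'
    have hgc' : ∀ a b, g k (c' a b) = Er a b := by
      intro a b
      rw [hc', Matrix.map_apply, hgf, hgc]
    have hcc' : c' * c' = c' := by
      ext a b
      have h1 : k' (a, b) ≤ k :=
        hk _ (Finset.mem_insert_of_mem (Finset.mem_image_of_mem _ (Finset.mem_univ (a, b))))
      have h2 : ∀ z : A j, f j k hjk z = f (k' (a, b)) k h1 (f j (k' (a, b)) (hk' (a, b)) z) := by
        intro z
        have h3 := DFunLike.congr_fun (hf_comp j (k' (a, b)) k (hk' (a, b)) h1) z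
        simpa using h3.symm
      have h4 : (c' * c') a b = f j k hjk ((c * c) a b) := by
        rw [Matrix.mul_apply, Matrix.mul_apply, map_sum]
        exact Finset.sum_congr rfl fun x _ => by
          simp [hc', Matrix.map_apply, map_mul]
      calc (c' * c') a b = f j k hjk ((c * c) a b) := h4
        _ = f (k' (a, b)) k h1 (f j (k' (a, b)) (hk' (a, b)) ((c * c) a b)) := h2 _
        _ = f (k' (a, b)) k h1 (f j (k' (a, b)) (hk' (a, b)) (c a b)) := by rw [hfk' (a, b)]
        _ = f j k hjk (c a b) := (h2 _).symm
        _ = c' a b := by rw [hc', Matrix.map_apply]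
    set E : (Fin n → A k) →ₗ[A k] (Fin n → A k) := Matrix.toLin' c' with hE
    have hEidem : ∀ v, E (E v) = E v := by
      intro v
      rw [hE, ← Matrix.toLin'_mul_apply, hcc']
    have hrange : ∀ x : LinearMap.range E, E x.val = x.val := by
      rintro ⟨x, v, rfl⟩
      exact hEidem v
    have hproj : Module.Projective (A k) ↥(LinearMap.range E) :=
      Module.Projective.of_split (LinearMap.range E).subtype E.rangeRestrict
        (by apply LinearMap.ext; intro x; apply Subtype.ext; exact hrange x)
    refine ⟨k, ↥(LinearMap.range E), inferInstance, inferInstance, inferInstance, hproj, ?_⟩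
    letI : Algebra (A k) R := (g k).toRingHom.toAlgebra
    set G : (Fin n → A k) →ₗ[A k] (Fin n → R) :=
      { toFun := fun v i => g k (v i)
        map_add' := fun v w => by funext i; simp
        map_smul' := fun a v => by
          funext i
          simp only [Pi.smul_apply, smul_eq_mul, RingHom.id_apply, map_mul]
          rw [Algebra.smul_def]
          rfl } with hG
    have hGapp : ∀ (v : Fin n → A k) (i : Fin n), G v i = g k (v i) := fun v i => by
      rw [hG]; rfl
    have he2 : e = Matrix.toLin' Er := (Matrix.toLin'_toMatrix' e).symm
    have hGE : ∀ v, G (E v) = e (G v) := by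
      intro v
      funext a
      rw [hGapp, hE, he2, Matrix.toLin'_apply, Matrix.toLin'_apply]
      show g k (dotProduct (c' a) v) = dotProduct (Er a) (G v)
      rw [dotProduct, dotProduct, map_sum]
      refine Finset.sum_congr rfl fun b _ => ?_
      rw [map_mul, hgc', hGapp]
    set w : Fin n → ↥(LinearMap.range E) :=
      fun b => ⟨E (Pi.single b 1), LinearMap.mem_range_self E _⟩ with hw
    set αflat : (R ⊗[A k] ↥(LinearMap.range E)) →ₗ[R] (Fin n → R) :=
      LinearMap.liftBaseChange R (G ∘ₗ (LinearMap.range E).subtype) with hαflat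
    set β0 : (Fin n → R) →ₗ[R] (R ⊗[A k] ↥(LinearMap.range E)) :=
      (Pi.basisFun R (Fin n)).constr R (fun b => (1 : R) ⊗ₜ[A k] w b) with hβ0
    have hGsingle : ∀ b, G (Pi.single b 1) = Pi.single b 1 := by
      intro b
      funext i
      rw [hGapp]
      rcases eq_or_ne i b with h | h
      · subst h; rw [Pi.single_eq_same, Pi.single_eq_same, map_one]
      · rw [Pi.single_eq_of_ne h, Pi.single_eq_of_ne h, map_zero]
    have comp0 : ∀ v : Fin n → R, αflat (β0 v) = e v := by
      intro v
      conv_lhs => rw [← (Pi.basisFun R (Fin n)).sum_repr v]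
      conv_rhs => rw [← (Pi.basisFun R (Fin n)).sum_repr v]
      rw [map_sum, map_sum, map_sum]
      refine Finset.sum_congr rfl fun b _ => ?_
      rw [map_smul, map_smul, map_smul]
      congr 1
      rw [hβ0, Module.Basis.constr_basis, hαflat, LinearMap.liftBaseChange_tmul, one_smul,
        LinearMap.comp_apply, Submodule.coe_subtype]
      show G (w b).val = e ((Pi.basisFun R (Fin n)) b)
      rw [hw]
      show G (E (Pi.single b 1)) = e ((Pi.basisFun R (Fin n)) b)
      rw [hGE, hGsingle, Pi.basisFun_apply]
    have claimB : ∀ y : ↥(LinearMap.range E), β0 (G y.val) = (1 : R) ⊗ₜ[A k] y := by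
      intro y
      conv_lhs => rw [← (Pi.basisFun R (Fin n)).sum_repr (G y.val)]
      rw [map_sum]
      simp only [map_smul]
      have step : ∀ b : Fin n,
          (Pi.basisFun R (Fin n)).repr (G y.val) b • β0 ((Pi.basisFun R (Fin n)) b)
            = (1 : R) ⊗ₜ[A k] (y.val b • w b) := by
        intro b
        rw [hβ0, Module.Basis.constr_basis, Pi.basisFun_repr]
        show G y.val b • ((1 : R) ⊗ₜ[A k] w b) = (1 : R) ⊗ₜ[A k] (y.val b • w b)
        have h1 : G y.val b = algebraMap (A k) R (y.val b) := hGapp _ _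
        rw [h1, smul_tmul', smul_eq_mul, mul_one, Algebra.algebraMap_eq_smul_one, smul_tmul]
      rw [Finset.sum_congr rfl fun b _ => step b, ← TensorProduct.tmul_sum]
      congr 1
      apply Subtype.ext
      have hval : ((∑ b, y.val b • w b : ↥(LinearMap.range E)) : Fin n → A k) = E y.val := by
        calc ((∑ b, y.val b • w b : ↥(LinearMap.range E)) : Fin n → A k)
            = ∑ b, y.val b • E ((Pi.single b 1 : Fin n → A k)) := by
              rw [AddSubmonoidClass.coe_finset_sum]
              refine Finset.sum_congr rfl fun b _ => ?_
              rw [SetLike.val_smul, hw]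
          _ = ∑ b, E (y.val b • (Pi.single b 1 : Fin n → A k)) := by simp only [map_smul]
          _ = E (∑ b, y.val b • (Pi.single b 1 : Fin n → A k)) := (map_sum E _ _).symm
          _ = E y.val := by
              congr 1
              have hsing : ∀ b : Fin n, y.val b • (Pi.single b 1 : Fin n → A k) = (Pi.single b (y.val b) : Fin n → A k) := by
                intro b
                rw [← Pi.single_smul, smul_eq_mul, mul_one]
              rw [Finset.sum_congr rfl fun b _ => hsing b, Finset.univ_sum_single]
      rw [hval]
      exact hrange y
    set α : (R ⊗[A k] ↥(LinearMap.range E)) →ₗ[R] M := p ∘ₗ αflat with hα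
    set β : M →ₗ[R] (R ⊗[A k] ↥(LinearMap.range E)) := β0 ∘ₗ s with hβ
    have h1 : α ∘ₗ β = LinearMap.id := by
      apply LinearMap.ext; intro m
      simp only [hα, hβ, LinearMap.comp_apply, LinearMap.id_apply]
      rw [comp0, he, LinearMap.comp_apply, hps, hps]
    have h2 : β ∘ₗ α = LinearMap.id := by
      apply LinearMap.ext; intro x
      rw [LinearMap.comp_apply, LinearMap.id_apply]
      induction x with
      | zero => simp
      | tmul r y =>
        have e1 : αflat (r ⊗ₜ[A k] y) = r • G y.val := by rw [hαflat]; rfl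
        have h3 : s (p (G y.val)) = G y.val := by
          calc s (p (G y.val)) = e (G y.val) := by rw [he]; rfl
            _ = G y.val := by rw [← hGE, hrange y]
        simp only [hα, hβ, LinearMap.comp_apply]
        rw [e1, map_smul, map_smul, map_smul, h3, claimB y, smul_tmul', smul_eq_mul, mul_one]
      | add u v hu hv => rw [map_add, map_add, hu, hv]
    exact ⟨LinearEquiv.ofLinear α β h1 h2⟩
  · -- fullness
    intro χ
    set bRP := Algebra.TensorProduct.basis R (Pi.basisFun R0 (Fin nP)) with hbRP
    set bRQ := Algebra.TensorProduct.basis R (Pi.basisFun R0 (Fin nQ)) with hbRQ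
    set L : (R ⊗[R0] (Fin nP → R0)) →ₗ[R] (R ⊗[R0] (Fin nQ → R0)) :=
      (sQ.baseChange R) ∘ₗ χ ∘ₗ (pP.baseChange R) with hL
    choose j0 y0 hy0 using fun q : Fin nP × Fin nQ => hsurj (bRQ.repr (L (bRP q.1)) q.2)
    obtain ⟨j, hj⟩ := Finset.exists_le (Finset.image j0 Finset.univ)
    have hj' : ∀ q, j0 q ≤ j := fun q => hj _ (Finset.mem_image_of_mem _ (Finset.mem_univ q))
    set c : Fin nP → Fin nQ → A j := fun a b => f (j0 (a, b)) j (hj' _) (y0 (a, b)) with hc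
    have hgc : ∀ a b, g j (c a b) = bRQ.repr (L (bRP a)) b := by
      intro a b
      rw [hc, hgf]
      exact hy0 (a, b)
    set bAP := Algebra.TensorProduct.basis (A j) (Pi.basisFun R0 (Fin nP)) with hbAP
    set bAQ := Algebra.TensorProduct.basis (A j) (Pi.basisFun R0 (Fin nQ)) with hbAQ
    set d : ((A j) ⊗[R0] (Fin nP → R0)) →ₗ[A j] ((A j) ⊗[R0] (Fin nQ → R0)) :=
      bAP.constr (A j) (fun a => ∑ b, c a b • bAQ b) with hd
    refine ⟨j, (pQ.baseChange (A j)) ∘ₗ d ∘ₗ (sP.baseChange (A j)), ?_⟩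
    have claimA0 : ∀ a, L (bRP a)
        = TensorProduct.map (g j).toLinearMap LinearMap.id (d (bAP a)) := by
      intro a
      rw [hd, Module.Basis.constr_basis, map_sum]
      conv_lhs => rw [← bRQ.sum_repr (L (bRP a))]
      refine Finset.sum_congr rfl fun b _ => ?_
      rw [Tm_smul, Tm_basis, hgc]
    have claimA : ∀ y : (A j) ⊗[R0] (Fin nP → R0),
        L (TensorProduct.map (g j).toLinearMap LinearMap.id y)
          = TensorProduct.map (g j).toLinearMap LinearMap.id (d y) := by
      intro y
      conv_lhs => rw [← bAP.sum_repr y]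
      conv_rhs => rw [← bAP.sum_repr y]
      rw [map_sum, map_sum, map_sum, map_sum]
      refine Finset.sum_congr rfl fun a _ => ?_
      rw [Tm_smul, Tm_basis, ← hbRP, map_smul, map_smul, Tm_smul, claimA0 a]
    intro x
    rw [LinearMap.comp_apply, LinearMap.comp_apply, Tm_baseChange, ← claimA, Tm_baseChange]
    rw [hL, LinearMap.comp_apply, LinearMap.comp_apply]
    rw [← LinearMap.comp_apply (pP.baseChange R) (sP.baseChange R), ← LinearMap.baseChange_comp,
      hsP, LinearMap.baseChange_id, LinearMap.id_apply]
    rw [← LinearMap.comp_apply (pQ.baseChange R) (sQ.baseChange R), ← LinearMap.baseChange_comp,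
      hsQ, LinearMap.baseChange_id, LinearMap.id_apply]
  · -- faithfulness
    intro j φ ψ h
    set bAP := Algebra.TensorProduct.basis (A j) (Pi.basisFun R0 (Fin nP)) with hbAP
    set δ : ((A j) ⊗[R0] P) →ₗ[A j] ((A j) ⊗[R0] Q) := φ - ψ with hδ
    have hδ0 : ∀ x, TensorProduct.map (g j).toLinearMap LinearMap.id (δ x) = 0 := by
      intro x
      rw [hδ, LinearMap.sub_apply, map_sub, h x, sub_self]
    set D : ((A j) ⊗[R0] (Fin nP → R0)) →ₗ[A j] ((A j) ⊗[R0] Q) :=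
      δ ∘ₗ pP.baseChange (A j) with hD
    choose k' hk' hfk' using fun a : Fin nP =>
      key_split f g hf_comp hexact pQ sQ hsQ j (D (bAP a)) (hδ0 _)
    obtain ⟨k, hk⟩ := Finset.exists_le (insert j (Finset.image k' Finset.univ))
    have hjk : j ≤ k := hk j (Finset.mem_insert_self _ _)
    refine ⟨k, hjk, ?_⟩
    have hDk : ∀ a, TensorProduct.map (f j k hjk).toLinearMap LinearMap.id (D (bAP a)) = 0 := by
      intro a
      have h1 : k' a ≤ k :=
        hk _ (Finset.mem_insert_of_mem (Finset.mem_image_of_mem _ (Finset.mem_univ a)))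
      have h2 := Tm_comp (f j (k' a) (hk' a)) (f (k' a) k h1) (D (bAP a))
      rw [hf_comp] at h2
      rw [h2, hfk' a, map_zero]
    have hzero : ∀ x, TensorProduct.map (f j k hjk).toLinearMap LinearMap.id (δ x) = 0 := by
      intro x
      have hx : δ x = D (sP.baseChange (A j) x) := by
        rw [hD, LinearMap.comp_apply, ← LinearMap.comp_apply (pP.baseChange (A j)),
          ← LinearMap.baseChange_comp, hsP, LinearMap.baseChange_id, LinearMap.id_apply]
      rw [hx]
      set y := sP.baseChange (A j) x
      conv_lhs => rw [← bAP.sum_repr y]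
      rw [map_sum, map_sum]
      refine Finset.sum_eq_zero fun a _ => ?_
      rw [map_smul, Tm_smul, hDk a, smul_zero]
    intro x
    have h3 := hzero x
    rw [hδ, LinearMap.sub_apply, map_sub, sub_eq_zero] at h3
    exact h3
end
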